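/- arXiv:1501.07790 — 4 statements merged into one kernel-verified Lean document; each statement's English description precedes it below -/
import Mathlib

section
/- Let v ≥ 7 with v ≡ 1 (mod 6), let D be a binary q-Steiner triple system S_2[2,3,v], and let A in GL(v, F_2) be an automorphism of D with A² = 1 and A ≠ 1. Then there exists s with 1 ≤ s ≤ ⌊v/2⌋ such that 3 divides s and A is conjugate in GL(v, F_2) to the matrix A_{v,s}. -/
set_option synthInstance.maxHeartbeats 1000000
set_option maxHeartbeats 1600000
open Module Submodule Finset


/-- The space `F_2^v` of binary row vectors of length `v`. -/
abbrev BinVec (v : ℕ) := Fin v → ZMod 2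

/-- The image `U·A` of a subspace `U` of `F_2^v` under the linear map `x ↦ x·A`
given by the matrix `A`. -/
def subApply (v : ℕ) (A : Matrix (Fin v) (Fin v) (ZMod 2))
    (U : Submodule (ZMod 2) (BinVec v)) : Submodule (ZMod 2) (BinVec v) :=
  U.map (Matrix.vecMulLinear A)

/-- A binary `q`-Steiner triple system `S_2[2,3,v]`: a set of `3`-dimensional
subspaces (blocks) of `F_2^v` such that every `2`-dimensional subspace is
contained in exactly one block. -/
def IsSteinerTriple (v : ℕ) (D : Set (Submodule (ZMod 2) (BinVec v))) : Prop :=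
  (∀ B ∈ D, Module.finrank (ZMod 2) B = 3) ∧
  ∀ T : Submodule (ZMod 2) (BinVec v), Module.finrank (ZMod 2) T = 2 →
    ∃! B, B ∈ D ∧ T ≤ B

/-- The matrix `A` is an automorphism of `D`: `U ↦ U·A` maps `D` onto itself. -/
def IsAutM (v : ℕ) (A : Matrix (Fin v) (Fin v) (ZMod 2))
    (D : Set (Submodule (ZMod 2) (BinVec v))) : Prop :=
  subApply v A '' D = D

lemma subApply_one (v : ℕ) (U : Submodule (ZMod 2) (BinVec v)) :
    subApply v 1 U = U := by
  have h : Matrix.vecMulLinear (1 : Matrix (Fin v) (Fin v) (ZMod 2)) = LinearMap.id := by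
    refine LinearMap.ext fun x => ?_
    simp [Matrix.vecMulLinear_apply]
  simp [subApply, h]

lemma subApply_mul (v : ℕ) (A B : Matrix (Fin v) (Fin v) (ZMod 2))
    (U : Submodule (ZMod 2) (BinVec v)) :
    subApply v (A * B) U = subApply v B (subApply v A U) := by
  have h : Matrix.vecMulLinear (A * B) =
      (Matrix.vecMulLinear B).comp (Matrix.vecMulLinear A) := LinearMap.ext fun x => by
    simp only [Matrix.vecMulLinear_apply, LinearMap.coe_comp, Function.comp_apply]
    exact (Matrix.vecMul_vecMul x A B).symm
  rw [subApply, h, Submodule.map_comp]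
  rfl

lemma subApply_comp (v : ℕ) (A B : Matrix (Fin v) (Fin v) (ZMod 2)) :
    (subApply v B) ∘ (subApply v A) = subApply v (A * B) :=
  funext fun U => (subApply_mul v A B U).symm

/-- The automorphism group of `D`, as a subgroup of `GL(v, F_2)`. -/
def Aut (v : ℕ) (D : Set (Submodule (ZMod 2) (BinVec v))) :
    Subgroup (GL (Fin v) (ZMod 2)) where
  carrier := {A | IsAutM v A.val D}
  one_mem' := by
    show subApply v (1 : GL (Fin v) (ZMod 2)).val '' D = D
    rw [show (1 : GL (Fin v) (ZMod 2)).val = 1 from rfl]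
    rw [show subApply v (1 : Matrix (Fin v) (Fin v) (ZMod 2)) = id from
      funext (subApply_one v), Set.image_id]
  mul_mem' := by
    intro A B hA hB
    show subApply v (A * B : GL (Fin v) (ZMod 2)).val '' D = D
    rw [show (A * B : GL (Fin v) (ZMod 2)).val = A.val * B.val from rfl]
    rw [← subApply_comp, Set.image_comp]
    rw [show subApply v A.val '' D = D from hA]
    exact hB
  inv_mem' := by
    intro A hA
    show subApply v (A⁻¹ : GL (Fin v) (ZMod 2)).val '' D = D
    conv_lhs => rw [← show subApply v A.val '' D = D from hA]
    rw [← Set.image_comp, subApply_comp]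
    rw [show A.val * (A⁻¹ : GL (Fin v) (ZMod 2)).val = 1 from A.mul_inv]
    rw [show subApply v (1 : Matrix (Fin v) (Fin v) (ZMod 2)) = id from
      funext (subApply_one v), Set.image_id]

/-- `pairSwap s i` swaps `2m ↔ 2m+1` for `i < 2s` and fixes `i` otherwise. -/
def pairSwap (s i : ℕ) : ℕ :=
  if i < 2 * s then (if i % 2 = 0 then i + 1 else i - 1) else i

/-- The block diagonal matrix `A_{v,s}`: `s` consecutive blocks `[[0,1],[1,0]]`
on the diagonal, followed by a `(v-2s)×(v-2s)` identity matrix. -/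
def Avs (v s : ℕ) : Matrix (Fin v) (Fin v) (ZMod 2) :=
  Matrix.of fun i j => if (j : ℕ) = pairSwap s (i : ℕ) then 1 else 0

/-- `M` and `N` are conjugate in `GL(v, F_2)`. -/
def ConjGL (v : ℕ) (M N : Matrix (Fin v) (Fin v) (ZMod 2)) : Prop :=
  ∃ P : GL (Fin v) (ZMod 2), M = P.val * N * (P⁻¹).val

/-- The orbit of a subspace `P` under the subgroup generated by `A`. -/
def orbitOf (v : ℕ) (A : GL (Fin v) (ZMod 2)) (P : Submodule (ZMod 2) (BinVec v)) :
    Set (Submodule (ZMod 2) (BinVec v)) :=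
  {Q | ∃ g ∈ Subgroup.zpowers A, Q = subApply v (g : GL (Fin v) (ZMod 2)).val P}

/-- The block diagonal matrix consisting of the 3×3 upper-triangular Jordan block
(1s on diagonal and superdiagonal) followed by the 4×4 upper-triangular Jordan
block (1s on diagonal and superdiagonal). -/
def JordanJ3J4 : Matrix (Fin 7) (Fin 7) (ZMod 2) :=
  Matrix.of fun i j =>
    if j = i then 1 else if (j : ℕ) = (i : ℕ) + 1 ∧ (i : ℕ) ≠ 2 then 1 else 0

/-- The block diagonal matrix consisting of `k` consecutive 2×2 blocks
`[[0,1],[1,1]]` on the diagonal, followed by a `(v-2k)×(v-2k)` identity matrix. -/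
def Bvk (v k : ℕ) : Matrix (Fin v) (Fin v) (ZMod 2) :=
  Matrix.of fun i j =>
    if (i : ℕ) < 2 * k then
      (if (i : ℕ) % 2 = 0 then (if (j : ℕ) = (i : ℕ) + 1 then 1 else 0)
       else (if (j : ℕ) = (i : ℕ) - 1 ∨ (j : ℕ) = (i : ℕ) then 1 else 0))
    else if i = j then 1 else 0


lemma zmod2_add_self {V : Type*} [AddCommGroup V] [Module (ZMod 2) V] (y : V) : y + y = 0 := by
  have h := two_smul (ZMod 2) y
  rw [show (2 : ZMod 2) = 0 from rfl, zero_smul] at h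
  exact h.symm

lemma zmod2_neg_eq {V : Type*} [AddCommGroup V] [Module (ZMod 2) V] (y : V) : -y = y :=
  neg_eq_of_add_eq_zero_left (zmod2_add_self y)

lemma pairSwap_lt {v s i : ℕ} (hi : i < v) (hs : 2 * s ≤ v) : pairSwap s i < v := by
  unfold pairSwap; split_ifs <;> omega

def mixFun (v s t : ℕ) (h : 2 * s + t = v) : (Fin s ⊕ Fin s ⊕ Fin t) → Fin v :=
  Sum.elim (fun m => ⟨2 * m, by have := m.isLt; omega⟩)
    (Sum.elim (fun m => ⟨2 * m + 1, by have := m.isLt; omega⟩)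
      (fun j => ⟨2 * s + j, by have := j.isLt; omega⟩))

lemma mixFun_bij (v s t : ℕ) (h : 2 * s + t = v) : Function.Bijective (mixFun v s t h) := by
  rw [Fintype.bijective_iff_injective_and_card]
  constructor
  · rintro (m | m | j) (m' | m' | j') hab <;>
      simp only [mixFun, Sum.elim_inl, Sum.elim_inr, Fin.mk.injEq] at hab
    · exact congrArg Sum.inl (Fin.ext (by omega))
    · exfalso; omega
    · exfalso; have := m.isLt; omega
    · exfalso; omega
    · exact congrArg (fun x => Sum.inr (Sum.inl x)) (Fin.ext (by omega))
    · exfalso; have := m.isLt; omega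
    · exfalso; have := j.isLt; omega
    · exfalso; have := j.isLt; omega
    · exact congrArg (fun x => Sum.inr (Sum.inr x)) (Fin.ext (by omega))
  · simp only [Fintype.card_sum, Fintype.card_fin]; omega

noncomputable def mixEquiv (v s t : ℕ) (h : 2 * s + t = v) : (Fin s ⊕ Fin s ⊕ Fin t) ≃ Fin v :=
  Equiv.ofBijective _ (mixFun_bij v s t h)

lemma mixEquiv_apply (v s t : ℕ) (h : 2 * s + t = v) (x : Fin s ⊕ Fin s ⊕ Fin t) :
    mixEquiv v s t h x = mixFun v s t h x := rfl

lemma involution_conj (v : ℕ) (A : GL (Fin v) (ZMod 2)) (hv : 0 < v)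
    (hφφ : ∀ x : BinVec v, Matrix.vecMulLinear A.val (Matrix.vecMulLinear A.val x) = x) :
    2 * finrank (ZMod 2) (LinearMap.range (Matrix.vecMulLinear A.val - LinearMap.id)) ≤ v ∧
    ConjGL v A.val (Avs v (finrank (ZMod 2)
      (LinearMap.range (Matrix.vecMulLinear A.val - LinearMap.id)))) := by
  classical
  set φ := Matrix.vecMulLinear A.val with hφdef
  set ℓ : BinVec v →ₗ[ZMod 2] BinVec v := φ - LinearMap.id with hℓdef
  have hℓ_apply : ∀ x, ℓ x = φ x - x := fun x => rfl
  set W := LinearMap.range ℓ with hWdef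
  set F := LinearMap.ker ℓ with hFdef
  have hmemF : ∀ x, x ∈ F ↔ φ x = x := by
    intro x; rw [LinearMap.mem_ker, hℓ_apply, sub_eq_zero]
  have hℓφ : ∀ y, ℓ (φ y) = ℓ y := by
    intro y
    rw [hℓ_apply, hℓ_apply, hφφ y, ← zmod2_neg_eq (φ y - y)]
    rw [neg_sub]
  have hxφx : ∀ y, y + φ y = ℓ y := by
    intro y
    rw [hℓ_apply, sub_eq_add_neg, zmod2_neg_eq, add_comm]
  have hWF : W ≤ F := by
    rintro y ⟨x, rfl⟩
    rw [hmemF]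
    have h1 := hℓφ x
    rw [hℓ_apply, hℓ_apply, hφφ x] at h1
    rw [hℓ_apply, map_sub, hφφ x]
    rw [← h1]
  set s := finrank (ZMod 2) W with hsdef
  set f := finrank (ZMod 2) F with hfdef
  have hsf : s + f = v := by
    have := LinearMap.finrank_range_add_finrank_ker ℓ
    rwa [finrank_fin_fun] at this
  have hsle : s ≤ f := Submodule.finrank_mono hWF
  have h2s : 2 * s ≤ v := by omega
  -- basis of W, coerced into V
  let bW : Basis (Fin s) (ZMod 2) W := Module.finBasis (ZMod 2) W
  let u : Fin s → BinVec v := fun m => (bW m : BinVec v)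
  have hu_indep : LinearIndependent (ZMod 2) u :=
    bW.linearIndependent.map' W.subtype (Submodule.ker_subtype W)
  have hu_mem : ∀ m, u m ∈ W := fun m => (bW m).2
  have hx_ex : ∀ m : Fin s, ∃ x, ℓ x = u m := fun m => LinearMap.mem_range.mp (hu_mem m)
  let x_ : Fin s → BinVec v := fun m => (hx_ex m).choose
  have hx : ∀ m, ℓ (x_ m) = u m := fun m => (hx_ex m).choose_spec
  -- complement of W inside F
  let W' : Submodule (ZMod 2) F := W.comap F.subtype
  obtain ⟨C, hC⟩ := Submodule.exists_isCompl W'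
  set t := finrank (ZMod 2) C with htdef
  have hW's : finrank (ZMod 2) W' = s :=
    (Submodule.comapSubtypeEquivOfLe hWF).finrank_eq
  have hst : s + t = f := by
    have := Submodule.finrank_add_eq_of_isCompl hC
    rwa [hW's] at this
  let bC : Basis (Fin t) (ZMod 2) C := Module.finBasis (ZMod 2) C
  let w : Fin t → BinVec v := fun j => ((bC j : F) : BinVec v)
  have hw_memF : ∀ j, w j ∈ F := fun j => ((bC j : F)).2
  have hw_indep : LinearIndependent (ZMod 2) w := by
    have h1 := bC.linearIndependent.map' C.subtype (Submodule.ker_subtype C)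
    have h2 := h1.map' F.subtype (Submodule.ker_subtype F)
    exact h2
  have hspan_u : Submodule.span (ZMod 2) (Set.range u) = W := by
    have : Set.range u = W.subtype '' (Set.range bW) := by
      rw [← Set.range_comp]; rfl
    rw [this, ← Submodule.map_span, bW.span_eq, Submodule.map_top, Submodule.range_subtype]
  have hspan_w : Submodule.span (ZMod 2) (Set.range w) = (C.map F.subtype) := by
    have : Set.range w = F.subtype '' (C.subtype '' (Set.range bC)) := by
      rw [← Set.range_comp, ← Set.range_comp]; rfl
    rw [this, ← Submodule.map_span, ← Submodule.map_span, bC.span_eq,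
      Submodule.map_top, Submodule.range_subtype]
  have hdisj : Disjoint (Submodule.span (ZMod 2) (Set.range u))
      (Submodule.span (ZMod 2) (Set.range w)) := by
    rw [hspan_u, hspan_w, disjoint_iff]
    have hinj : Function.Injective F.subtype := Subtype.val_injective
    have h1 : W ⊓ C.map F.subtype = (W'.map F.subtype) ⊓ (C.map F.subtype) := by
      rw [Submodule.map_comap_subtype, inf_eq_right.mpr hWF]
    rw [h1, ← Submodule.map_inf F.subtype hinj, hC.inf_eq_bot, Submodule.map_bot]
  have huw_indep : LinearIndependent (ZMod 2) (Sum.elim u w) :=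
    hu_indep.sum_type hw_indep hdisj
  have hneg2 : ∀ a : ZMod 2, -a = a := by decide
  -- combined family
  set c : (Fin s ⊕ Fin s ⊕ Fin t) → BinVec v :=
    Sum.elim x_ (Sum.elim (fun m => φ (x_ m)) w) with hcdef
  have hw0 : ∀ j, ℓ (w j) = 0 := fun j => LinearMap.mem_ker.mp (hw_memF j)
  have hc_indep : LinearIndependent (ZMod 2) c := by
    rw [Fintype.linearIndependent_iff]
    intro g hg
    rw [Fintype.sum_sum_type, Fintype.sum_sum_type] at hg
    simp only [hcdef, Sum.elim_inl, Sum.elim_inr] at hg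
    have hgeq : ∀ m, g (Sum.inr (Sum.inl m)) = g (Sum.inl m) := by
      have h1 := congrArg ℓ hg
      simp only [map_add, map_sum, map_smul, map_zero] at h1
      simp only [hℓφ, hx, hw0, smul_zero, Finset.sum_const_zero, add_zero] at h1
      rw [← Finset.sum_add_distrib] at h1
      have h2 := Fintype.linearIndependent_iff.mp hu_indep
        (fun m => g (Sum.inl m) + g (Sum.inr (Sum.inl m))) (by
          rw [← h1]; exact Finset.sum_congr rfl (fun m _ => (add_smul _ _ _)))
      intro m
      have h4 : g (Sum.inr (Sum.inl m)) = -(g (Sum.inl m)) :=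
        eq_neg_of_add_eq_zero_right (h2 m)
      rw [h4, hneg2]
    simp only [hgeq] at hg
    have hfinal := Fintype.linearIndependent_iff.mp huw_indep
      (Sum.elim (fun m => g (Sum.inl m)) (fun j => g (Sum.inr (Sum.inr j)))) (by
        rw [Fintype.sum_sum_type]
        simp only [Sum.elim_inl, Sum.elim_inr]
        have e1 : ∀ m ∈ Finset.univ, g (Sum.inl m) • u m
            = g (Sum.inl m) • x_ m + g (Sum.inl m) • φ (x_ m) := by
          intro m _; rw [← smul_add, hxφx (x_ m), hx m]
        rw [Finset.sum_congr rfl e1, Finset.sum_add_distrib, add_assoc]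
        exact hg)
    rintro (m | m | j)
    · exact hfinal (Sum.inl m)
    · rw [hgeq m]; exact hfinal (Sum.inl m)
    · exact hfinal (Sum.inr j)
  have hcard : Fintype.card (Fin s ⊕ Fin s ⊕ Fin t) = finrank (ZMod 2) (BinVec v) := by
    simp only [Fintype.card_sum, Fintype.card_fin, finrank_fin_fun]; omega
  haveI : Nonempty (Fin s ⊕ Fin s ⊕ Fin t) := by
    rw [← Fintype.card_pos_iff, hcard, finrank_fin_fun]; omega
  let b0 : Basis (Fin s ⊕ Fin s ⊕ Fin t) (ZMod 2) (BinVec v) :=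
    basisOfLinearIndependentOfCardEqFinrank hc_indep hcard
  have hb0 : ⇑b0 = c := coe_basisOfLinearIndependentOfCardEqFinrank hc_indep hcard
  have h2st : 2 * s + t = v := by omega
  let e := mixEquiv v s t h2st
  let B : Basis (Fin v) (ZMod 2) (BinVec v) := b0.reindex e
  have hB : ∀ i, B i = c (e.symm i) := by
    intro i; rw [Basis.reindex_apply, hb0]
  -- the key swap property
  have hkey : ∀ i : Fin v, φ (B i) =
      B ⟨pairSwap s (i : ℕ), pairSwap_lt i.isLt h2s⟩ := by
    intro i
    obtain ⟨ix, hix⟩ := e.surjective i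
    have hsymm : e.symm i = ix := by rw [← hix, Equiv.symm_apply_apply]
    rcases ix with m | m | j
    · have hival : (i : ℕ) = 2 * m := by rw [← hix]; rfl
      have hswap : pairSwap s (i : ℕ) = 2 * (m : ℕ) + 1 := by
        unfold pairSwap
        rw [hival, if_pos (by have := m.isLt; omega), if_pos (by omega)]
      have htarget : e.symm ⟨pairSwap s (i : ℕ), pairSwap_lt i.isLt h2s⟩
          = Sum.inr (Sum.inl m) := by
        rw [Equiv.symm_apply_eq]
        exact Fin.ext hswap
      rw [hB, hB, hsymm, htarget]
      rfl
    · have hival : (i : ℕ) = 2 * m + 1 := by rw [← hix]; rfl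
      have hswap : pairSwap s (i : ℕ) = 2 * (m : ℕ) := by
        unfold pairSwap
        rw [hival, if_pos (by have := m.isLt; omega), if_neg (by omega)]
        omega
      have htarget : e.symm ⟨pairSwap s (i : ℕ), pairSwap_lt i.isLt h2s⟩
          = Sum.inl m := by
        rw [Equiv.symm_apply_eq]
        exact Fin.ext hswap
      rw [hB, hB, hsymm, htarget]
      show φ (φ (x_ m)) = x_ m
      exact hφφ _
    · have hival : (i : ℕ) = 2 * s + j := by rw [← hix]; rfl
      have hswap : pairSwap s (i : ℕ) = (i : ℕ) := by
        unfold pairSwap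
        rw [if_neg (by omega)]
      have htarget : (⟨pairSwap s (i : ℕ), pairSwap_lt i.isLt h2s⟩ : Fin v) = i :=
        Fin.ext hswap
      rw [hB, hB, hsymm, htarget, hsymm]
      show φ (w j) = w j
      exact (hmemF _).mp (hw_memF j)
  -- the matrix with rows B i
  set P : Matrix (Fin v) (Fin v) (ZMod 2) := Matrix.of (fun i j => B i j) with hPdef
  have hPA : P * A.val = Avs v s * P := by
    ext i j
    have hl : (P * A.val) i j = φ (B i) j := by
      rw [Matrix.mul_apply, hφdef, Matrix.vecMulLinear_apply]
      simp only [Matrix.vecMul, dotProduct, hPdef, Matrix.of_apply]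
    have hr : (Avs v s * P) i j
        = B ⟨pairSwap s (i : ℕ), pairSwap_lt i.isLt h2s⟩ j := by
      rw [Matrix.mul_apply]
      have : ∀ k, Avs v s i k * P k j
          = if k = (⟨pairSwap s (i : ℕ), pairSwap_lt i.isLt h2s⟩ : Fin v)
            then P k j else 0 := by
        intro k
        rw [Avs, Matrix.of_apply]
        by_cases hk : k = (⟨pairSwap s (i : ℕ), pairSwap_lt i.isLt h2s⟩ : Fin v)
        · rw [if_pos hk, if_pos (by rw [hk]), one_mul]
        · rw [if_neg hk, if_neg (fun hc => hk (Fin.ext hc)), zero_mul]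
      rw [Finset.sum_congr rfl (fun k _ => this k), Finset.sum_ite_eq' Finset.univ _ (fun k => P k j),
        if_pos (Finset.mem_univ _)]
      rfl
    rw [hl, hr, hkey i]
  -- P is invertible
  have hPT : P.transpose = (Pi.basisFun (ZMod 2) (Fin v)).toMatrix ⇑B := by
    ext i j
    rw [Matrix.transpose_apply, Basis.toMatrix_apply, Pi.basisFun_repr]
    rfl
  haveI hinv1 : Invertible ((Pi.basisFun (ZMod 2) (Fin v)).toMatrix ⇑B) :=
    (Pi.basisFun (ZMod 2) (Fin v)).invertibleToMatrix B
  haveI hinv2 : Invertible P.transpose := hPT ▸ hinv1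
  haveI hinv3 : Invertible P := by
    have h := Matrix.invertibleTranspose P.transpose
    rwa [Matrix.transpose_transpose] at h
  refine ⟨h2s, ?_⟩
  let PU : GL (Fin v) (ZMod 2) := unitOfInvertible P
  refine ⟨PU⁻¹, ?_⟩
  have h1 : ((PU⁻¹ : GL (Fin v) (ZMod 2)) : Matrix (Fin v) (Fin v) (ZMod 2)) = ⅟P := rfl
  have h2 : ((PU⁻¹)⁻¹ : GL (Fin v) (ZMod 2)).val = P := by rw [inv_inv]; rfl
  rw [h1, h2]
  calc A.val = ⅟P * (P * A.val) := by rw [← mul_assoc, invOf_mul_self, one_mul]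
    _ = ⅟P * (Avs v s * P) := by rw [hPA]
    _ = ⅟P * Avs v s * P := (mul_assoc _ _ _).symm

lemma zmod2_pair_indep {V : Type*} [AddCommGroup V] [Module (ZMod 2) V] (x y : V)
    (hx : x ≠ 0) (hy : y ≠ 0) (hxy : x ≠ y) : LinearIndependent (ZMod 2) ![x, y] := by
  rw [LinearIndependent.pair_iff]
  intro s t hst
  have h01 : ∀ a : ZMod 2, a = 0 ∨ a = 1 := by decide
  rcases h01 s with rfl | rfl <;> rcases h01 t with rfl | rfl <;> simp_all
  apply hxy
  have := zmod2_add_self y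
  rw [← sub_eq_zero, sub_eq_add_neg, neg_eq_of_add_eq_zero_left this]
  simpa using hst

lemma finrank_span_pair {v : ℕ} (x y : BinVec v) (hx : x ≠ 0) (hy : y ≠ 0) (hxy : x ≠ y) :
    finrank (ZMod 2) (span (ZMod 2) ({x, y} : Set (BinVec v))) = 2 := by
  have h := finrank_span_eq_card (zmod2_pair_indep x y hx hy hxy)
  rw [show Set.range ![x, y] = {x, y} by simp [Set.pair_comm, Matrix.range_cons, Matrix.range_empty]] at h
  simpa using h

instance finiteSubmodule (v : ℕ) : Finite (Submodule (ZMod 2) (BinVec v)) :=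
  Finite.of_injective (fun U => (U : Set (BinVec v))) SetLike.coe_injective

lemma card_submodule {v : ℕ} (U : Submodule (ZMod 2) (BinVec v)) :
    Nat.card U = 2 ^ finrank (ZMod 2) U := by
  have : Fintype U := Fintype.ofFinite _
  rw [Nat.card_eq_fintype_card, card_eq_pow_finrank (K := ZMod 2) (V := U), ZMod.card]

lemma filter_mem_card {v : ℕ} (U : Submodule (ZMod 2) (BinVec v)) [DecidablePred (· ∈ U)] :
    ((Finset.univ : Finset (BinVec v)).filter (fun x => x ∈ U)).card = Nat.card U := by
  have h : ((Finset.univ : Finset (BinVec v)).filter (fun x => x ∈ U)).card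
      = Fintype.card {x : BinVec v // x ∈ U} := (Fintype.card_subtype _).symm
  rw [h, ← Nat.card_eq_fintype_card]

lemma zmod2_mem_span_singleton {v : ℕ} (u z : BinVec v) :
    z ∈ span (ZMod 2) ({u} : Set (BinVec v)) ↔ z = 0 ∨ z = u := by
  rw [Submodule.mem_span_singleton]
  constructor
  · rintro ⟨a, rfl⟩
    have : a = 0 ∨ a = 1 := by revert a; decide
    rcases this with rfl | rfl
    · left; rw [zero_smul]
    · right; rw [one_smul]
  · rintro (rfl | rfl)
    · exact ⟨0, by rw [zero_smul]⟩
    · exact ⟨1, by rw [one_smul]⟩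

lemma card_pairs {v : ℕ} (C : Submodule (ZMod 2) (BinVec v)) [DecidablePred (· ∈ C)] :
    ((Finset.univ : Finset (BinVec v × BinVec v)).filter
      (fun p => p.1 ∈ C ∧ p.2 ∈ C ∧ p.1 ≠ 0 ∧ p.2 ≠ 0 ∧ p.1 ≠ p.2)).card
    = (Nat.card C - 1) * (Nat.card C - 2) := by
  classical
  set CF := (Finset.univ : Finset (BinVec v)).filter (fun x => x ∈ C) with hCF
  have hCFcard : CF.card = Nat.card C := filter_mem_card C
  have h0 : (0 : BinVec v) ∈ CF := by
    rw [hCF, Finset.mem_filter]; exact ⟨Finset.mem_univ _, C.zero_mem⟩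
  set S := ((Finset.univ : Finset (BinVec v × BinVec v)).filter
      (fun p => p.1 ∈ C ∧ p.2 ∈ C ∧ p.1 ≠ 0 ∧ p.2 ≠ 0 ∧ p.1 ≠ p.2)) with hS
  have hmaps : ∀ p ∈ S, p.1 ∈ CF.erase 0 := by
    intro p hp
    rw [hS, Finset.mem_filter] at hp
    rw [Finset.mem_erase, hCF, Finset.mem_filter]
    exact ⟨hp.2.2.2.1, Finset.mem_univ _, hp.2.1⟩
  rw [Finset.card_eq_sum_card_fiberwise hmaps]
  have hfiber : ∀ u ∈ CF.erase 0,
      (S.filter (fun p => p.1 = u)).card = Nat.card C - 2 := by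
    intro u hu
    rw [Finset.mem_erase, hCF, Finset.mem_filter] at hu
    have himg : S.filter (fun p => p.1 = u)
        = ((CF.erase 0).erase u).image (fun w => (u, w)) := by
      ext p
      rw [Finset.mem_filter, hS, Finset.mem_filter, Finset.mem_image]
      constructor
      · rintro ⟨⟨_, h1, h2, h3, h4, h5⟩, h6⟩
        refine ⟨p.2, ?_, ?_⟩
        · rw [Finset.mem_erase, Finset.mem_erase, hCF, Finset.mem_filter]
          exact ⟨by rw [← h6]; exact (Ne.symm h5), h4, Finset.mem_univ _, h2⟩
        · rw [← h6]
      · rintro ⟨w, hw, rfl⟩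
        rw [Finset.mem_erase, Finset.mem_erase, hCF, Finset.mem_filter] at hw
        exact ⟨⟨Finset.mem_univ _, hu.2.2, hw.2.2.2, hu.1, hw.2.1, Ne.symm hw.1⟩, rfl⟩
    rw [himg, Finset.card_image_of_injective _ (fun a b hab => by simpa using congrArg Prod.snd hab),
      Finset.card_erase_of_mem (by
        rw [Finset.mem_erase]
        exact ⟨hu.1, by rw [hCF, Finset.mem_filter]; exact hu.2⟩),
      Finset.card_erase_of_mem h0, hCFcard]
    omega
  rw [Finset.sum_congr rfl hfiber, Finset.sum_const, smul_eq_mul,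
    Finset.card_erase_of_mem h0, hCFcard]

lemma pow2_mod7 (n : ℕ) : (2 : ZMod 7) ^ n = 2 ^ (n % 3) := by
  conv_lhs => rw [← Nat.div_add_mod n 3]
  rw [pow_add, pow_mul, show (2 : ZMod 7) ^ 3 = 1 from by decide, one_pow, one_mul]

lemma arith7 (v f a b : ℕ) (hfv : f ≤ v) (hv3 : v % 3 = 1) (hf2 : 2 ≤ f)
    (h1 : (2 ^ f - 1) * (2 ^ f - 2) = 42 * a + 6 * b)
    (h2 : 2 ^ f + 4 * b = 2 ^ v) : 3 ∣ (v - f) := by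
  have hm2 : (2 : ℕ) ≤ 2 ^ f := by
    calc (2 : ℕ) = 2 ^ 1 := rfl
      _ ≤ 2 ^ f := Nat.pow_le_pow_right (by norm_num) (by omega)
  have h1z : ((2 : ZMod 7) ^ f - 1) * ((2 : ZMod 7) ^ f - 2) = 6 * (b : ZMod 7) := by
    have hc := congrArg (fun n : ℕ => (n : ZMod 7)) h1
    push_cast [Nat.cast_sub (show 1 ≤ 2 ^ f by omega), Nat.cast_sub hm2] at hc
    rw [hc, show ((42 : ZMod 7)) = 0 from by decide, zero_mul, zero_add]
  have h2z : (2 : ZMod 7) ^ f + 4 * (b : ZMod 7) = (2 : ZMod 7) ^ v := by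
    have hc := congrArg (fun n : ℕ => (n : ZMod 7)) h2
    push_cast at hc
    exact hc
  have hkey : 4 * (((2 : ZMod 7) ^ f - 1) * ((2 : ZMod 7) ^ f - 2))
      = 6 * ((2 : ZMod 7) ^ v - (2 : ZMod 7) ^ f) := by
    rw [h1z]
    have h4b : (4 : ZMod 7) * (b : ZMod 7) = (2 : ZMod 7) ^ v - (2 : ZMod 7) ^ f := by
      rw [← h2z]; ring
    calc (4 : ZMod 7) * (6 * (b : ZMod 7)) = 6 * (4 * (b : ZMod 7)) := by ring
      _ = 6 * ((2 : ZMod 7) ^ v - (2 : ZMod 7) ^ f) := by rw [h4b]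
  rw [pow2_mod7 f, pow2_mod7 v, hv3] at hkey
  have hf3 : f % 3 = 1 := by
    have hlt : f % 3 < 3 := Nat.mod_lt _ (by norm_num)
    set r := f % 3 with hr
    interval_cases r
    · exact absurd hkey (by decide)
    · rfl
    · exact absurd hkey (by decide)
  omega

open scoped Classical in
lemma card_memB_split {v : ℕ} (B F' : Submodule (ZMod 2) (BinVec v)) :
    Nat.card B = Nat.card ↥(B ⊓ F')
      + ((Finset.univ : Finset (BinVec v)).filter (fun z => z ∈ B ∧ z ∉ F')).card := by
  classical
  have hsplit := Finset.card_filter_add_card_filter_not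
    (s := (Finset.univ : Finset (BinVec v)).filter (fun z => z ∈ B)) (p := fun z => z ∈ F')
  rw [Finset.filter_filter, Finset.filter_filter] at hsplit
  have h1 : ((Finset.univ : Finset (BinVec v)).filter (fun z => z ∈ B ∧ z ∈ F')).card
      = Nat.card ↥(B ⊓ F') := by
    rw [show ((Finset.univ : Finset (BinVec v)).filter (fun z => z ∈ B ∧ z ∈ F'))
        = ((Finset.univ : Finset (BinVec v)).filter (fun z => z ∈ B ⊓ F')) from
      Finset.filter_congr (fun z _ => by rw [Submodule.mem_inf])]
    exact filter_mem_card _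
  have h2 : ((Finset.univ : Finset (BinVec v)).filter (fun z => z ∈ B)).card = Nat.card B :=
    filter_mem_card _
  rw [← h2, ← hsplit, h1]

lemma counting (v : ℕ) (D : Set (Submodule (ZMod 2) (BinVec v))) (hD : IsSteinerTriple v D)
    (A : GL (Fin v) (ZMod 2)) (hAut : IsAutM v A.val D)
    (hφφ : ∀ x : BinVec v, Matrix.vecMulLinear A.val (Matrix.vecMulLinear A.val x) = x) :
    ∃ a b : ℕ,
      (2 ^ finrank (ZMod 2) (LinearMap.ker (Matrix.vecMulLinear A.val - LinearMap.id)) - 1) *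
        (2 ^ finrank (ZMod 2) (LinearMap.ker (Matrix.vecMulLinear A.val - LinearMap.id)) - 2)
        = 42 * a + 6 * b ∧
      2 ^ finrank (ZMod 2) (LinearMap.ker (Matrix.vecMulLinear A.val - LinearMap.id))
        + 4 * b = 2 ^ v := by
  classical
  set φ := Matrix.vecMulLinear A.val with hφdef
  set ℓ : BinVec v →ₗ[ZMod 2] BinVec v := φ - LinearMap.id with hℓdef
  have hℓ_apply : ∀ x, ℓ x = φ x - x := fun x => rfl
  set F := LinearMap.ker ℓ with hFdef
  set f := finrank (ZMod 2) F with hfdef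
  have hmemF : ∀ x, x ∈ F ↔ φ x = x := fun x => by
    rw [hFdef, LinearMap.mem_ker, hℓ_apply, sub_eq_zero]
  have hφ0 : φ 0 = 0 := map_zero φ
  have hxu : ∀ x, x + φ x ∈ F := fun x => by
    rw [hmemF, map_add, hφφ x, add_comm]
  have hu_ne : ∀ x, x ∉ F → x + φ x ≠ 0 := by
    intro x hx h0
    apply hx
    rw [hmemF]
    have h1 : φ x = -x := eq_neg_of_add_eq_zero_right h0
    rw [h1, zmod2_neg_eq]
  have hx_ne_φx : ∀ x, x ∉ F → x ≠ φ x := fun x hx h => hx ((hmemF x).mpr h.symm)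
  have hx_ne0 : ∀ x : BinVec v, x ∉ F → x ≠ 0 := fun x hx h => hx (by rw [h]; exact F.zero_mem)
  have hφx_ne0 : ∀ x, x ∉ F → φ x ≠ 0 := by
    intro x hx h
    apply hx_ne0 x hx
    rw [← hφφ x, h, hφ0]
  -- the unique block through a 2-dim subspace
  set blk : Submodule (ZMod 2) (BinVec v) → Submodule (ZMod 2) (BinVec v) :=
    fun T => if h : finrank (ZMod 2) T = 2 then (hD.2 T h).exists.choose else ⊥ with hblk
  have blk_spec : ∀ (T : Submodule (ZMod 2) (BinVec v)) (_ : finrank (ZMod 2) T = 2), blk T ∈ D ∧ T ≤ blk T := by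
    intro T h
    rw [hblk]
    dsimp only
    rw [dif_pos h]
    exact (hD.2 T h).exists.choose_spec
  have blk_eq : ∀ T B : Submodule (ZMod 2) (BinVec v), finrank (ZMod 2) T = 2 → B ∈ D → T ≤ B → blk T = B := by
    intro T B hT hB hTB
    exact (hD.2 T hT).unique ⟨(blk_spec T hT).1, (blk_spec T hT).2⟩ ⟨hB, hTB⟩
  have hD_inv : ∀ B ∈ D, subApply v A.val B ∈ D := by
    intro B hB; rw [← hAut]; exact Set.mem_image_of_mem _ hB
  have h_blk_inv : ∀ T : Submodule (ZMod 2) (BinVec v), finrank (ZMod 2) T = 2 → subApply v A.val T = T →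
      subApply v A.val (blk T) = blk T := by
    intro T hT hTinv
    have hB := blk_spec T hT
    have h1 : T ≤ subApply v A.val (blk T) := by
      conv_lhs => rw [← hTinv]
      exact Submodule.map_mono hB.2
    exact (blk_eq T _ hT (hD_inv _ hB.1) h1).symm
  have h_fix_inv : ∀ T : Submodule (ZMod 2) (BinVec v), T ≤ F → subApply v A.val T = T := by
    intro T hTF
    apply le_antisymm
    · intro z hz
      obtain ⟨y, hy, hyz⟩ := Submodule.mem_map.mp hz
      rw [← hyz, show φ y = y from (hmemF y).mp (hTF hy)]
      exact hy
    · intro z hz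
      exact Submodule.mem_map.mpr ⟨z, hz, (hmemF z).mp (hTF hz)⟩
  have hTx_inv : ∀ x : BinVec v, subApply v A.val (span (ZMod 2) ({x, φ x} : Set (BinVec v)))
      = span (ZMod 2) ({x, φ x} : Set (BinVec v)) := by
    intro x
    show Submodule.map φ _ = _
    rw [Submodule.map_span, Set.image_pair, hφφ x, Set.pair_comm]
  have span_pair_le : ∀ (x y : BinVec v) (B : Submodule (ZMod 2) (BinVec v)),
      span (ZMod 2) ({x, y} : Set (BinVec v)) ≤ B ↔ x ∈ B ∧ y ∈ B := by
    intro x y B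
    rw [Submodule.span_le, Set.insert_subset_iff, Set.singleton_subset_iff]
    rfl
  have hBF2 : ∀ B, B ∈ D → subApply v A.val B = B → ¬ B ≤ F →
      finrank (ZMod 2) ↥(B ⊓ F) = 2 := by
    intro B hB hBinv hBnle
    have hBinv' : Submodule.map φ B = B := hBinv
    have h3 : finrank (ZMod 2) B = 3 := hD.1 B hB
    have hle3 : finrank (ZMod 2) ↥(B ⊓ F) ≤ 3 := h3 ▸ Submodule.finrank_mono inf_le_left
    have hφB : ∀ y, y ∈ B → φ y ∈ B := by
      intro y hy
      have hmem : φ y ∈ Submodule.map φ B := Submodule.mem_map.mpr ⟨y, hy, rfl⟩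
      rwa [hBinv'] at hmem
    have hne3 : finrank (ZMod 2) ↥(B ⊓ F) ≠ 3 := by
      intro h
      apply hBnle
      have heq : B ⊓ F = B := Submodule.eq_of_le_of_finrank_le inf_le_left (by rw [h3, h])
      exact inf_eq_left.mp heq
    obtain ⟨x, hxB, hxF⟩ := SetLike.not_le_iff_exists.mp hBnle
    set u := x + φ x with hu
    have huB : u ∈ B := B.add_mem hxB (hφB x hxB)
    have huF : u ∈ F := hxu x
    have huBF : u ∈ B ⊓ F := Submodule.mem_inf.mpr ⟨huB, huF⟩
    have hune : u ≠ 0 := hu_ne x hxF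
    have hsp : span (ZMod 2) ({u} : Set (BinVec v)) ≤ B ⊓ F := by
      rw [Submodule.span_le, Set.singleton_subset_iff]
      exact huBF
    have h1le : 1 ≤ finrank (ZMod 2) ↥(B ⊓ F) := by
      calc 1 = finrank (ZMod 2) (span (ZMod 2) ({u} : Set (BinVec v))) :=
            (finrank_span_singleton hune).symm
        _ ≤ _ := Submodule.finrank_mono hsp
    by_contra hne2
    have hr1 : finrank (ZMod 2) ↥(B ⊓ F) = 1 := by omega
    have hBFspan : B ⊓ F = span (ZMod 2) ({u} : Set (BinVec v)) :=
      (Submodule.eq_of_le_of_finrank_le hsp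
        (by rw [hr1, finrank_span_singleton hune])).symm
    -- find y ∈ B \ F, y ∉ {x, φ x}
    have hcardB : Nat.card B = 8 := by
      rw [card_submodule, h3]; norm_num
    have hcardBF : Nat.card ↥(B ⊓ F) = 2 := by
      rw [card_submodule, hr1]; norm_num
    have hsplit := card_memB_split B F
    have hcard6 : ((Finset.univ : Finset (BinVec v)).filter (fun z => z ∈ B ∧ z ∉ F)).card = 6 := by
      omega
    have hex : ∃ y ∈ (Finset.univ : Finset (BinVec v)).filter (fun z => z ∈ B ∧ z ∉ F),
        y ∉ ({x, φ x} : Finset (BinVec v)) := by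
      by_contra hno
      push_neg at hno
      have hsub : ((Finset.univ : Finset (BinVec v)).filter (fun z => z ∈ B ∧ z ∉ F))
          ⊆ ({x, φ x} : Finset (BinVec v)) := hno
      have := Finset.card_le_card hsub
      have h2 : ({x, φ x} : Finset (BinVec v)).card ≤ 2 := Finset.card_insert_le _ _ |>.trans (by simp)
      omega
    obtain ⟨y, hy, hynotpair⟩ := hex
    rw [Finset.mem_filter] at hy
    rw [Finset.mem_insert, Finset.mem_singleton] at hynotpair
    push_neg at hynotpair
    have hyB : y ∈ B := hy.2.1
    have hyF : y ∉ F := hy.2.2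
    -- y + φ y is the unique nonzero fixed vector u
    have huy : y + φ y = u := by
      have h1 : y + φ y ∈ B ⊓ F := Submodule.mem_inf.mpr ⟨B.add_mem hyB (hφB y hyB), hxu y⟩
      rw [hBFspan] at h1
      rcases (zmod2_mem_span_singleton u _).mp h1 with h | h
      · exact absurd h (hu_ne y hyF)
      · exact h
    -- x + y is fixed
    have hxyF : x + y ∈ F := by
      rw [hmemF, map_add]
      have hφx : φ x = u + x := by rw [hu]; rw [add_comm x (φ x), add_assoc, zmod2_add_self, add_zero]
      have hφy : φ y = u + y := by rw [← huy]; rw [add_comm y (φ y), add_assoc, zmod2_add_self, add_zero]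
      rw [hφx, hφy]
      abel_nf
      rw [show (2 : ℤ) • u = u + u from two_zsmul u, zmod2_add_self, zero_add]
    have hxyBF : x + y ∈ B ⊓ F := Submodule.mem_inf.mpr ⟨B.add_mem hxB hyB, hxyF⟩
    rw [hBFspan] at hxyBF
    rcases (zmod2_mem_span_singleton u _).mp hxyBF with h | h
    · -- x + y = 0 → x = y
      have : x = y := by
        have h2 : y = -x := eq_neg_of_add_eq_zero_right h
        rw [h2, zmod2_neg_eq]
      exact hynotpair.1 this.symm
    · -- x + y = u = x + φ x → y = φ x
      rw [hu] at h
      exact hynotpair.2 (add_left_cancel h)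
  haveI : Fintype (Submodule (ZMod 2) (BinVec v)) := Fintype.ofFinite _
  set Ba := (Finset.univ : Finset (Submodule (ZMod 2) (BinVec v))).filter
    (fun B => B ∈ D ∧ B ≤ F) with hBa
  set B2 := (Finset.univ : Finset (Submodule (ZMod 2) (BinVec v))).filter
    (fun B => B ∈ D ∧ subApply v A.val B = B ∧ ¬ B ≤ F) with hB2
  have hTx2 : ∀ x, x ∉ F → finrank (ZMod 2) (span (ZMod 2) ({x, φ x} : Set (BinVec v))) = 2 :=
    fun x hx => finrank_span_pair x (φ x) (hx_ne0 x hx) (hφx_ne0 x hx) (hx_ne_φx x hx)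
  -- equation 2
  have heq2 : 2 ^ f + 4 * B2.card = 2 ^ v := by
    set X := (Finset.univ : Finset (BinVec v)).filter (fun x => x ∉ F) with hX
    have hmaps : ∀ x ∈ X, blk (span (ZMod 2) ({x, φ x} : Set (BinVec v))) ∈ B2 := by
      intro x hxX
      rw [hX, Finset.mem_filter] at hxX
      have hx := hxX.2
      have hT2 := hTx2 x hx
      have hBmem := (blk_spec _ hT2).1
      have hinv := h_blk_inv _ hT2 (hTx_inv x)
      have hnle : ¬ blk (span (ZMod 2) ({x, φ x} : Set (BinVec v))) ≤ F := by
        intro hle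
        exact hx (hle ((blk_spec _ hT2).2 (Submodule.subset_span (Set.mem_insert _ _))))
      rw [hB2, Finset.mem_filter]
      exact ⟨Finset.mem_univ _, hBmem, hinv, hnle⟩
    have hXcard := Finset.card_eq_sum_card_fiberwise hmaps
    have hfiber : ∀ B ∈ B2,
        (X.filter (fun x => blk (span (ZMod 2) ({x, φ x} : Set (BinVec v))) = B)).card = 4 := by
      intro B hBmem
      rw [hB2, Finset.mem_filter] at hBmem
      obtain ⟨-, hBD, hBinv, hBnle⟩ := hBmem
      have hBinv' : Submodule.map φ B = B := hBinv
      have hφB : ∀ y, y ∈ B → φ y ∈ B := by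
        intro y hy
        have hmem : φ y ∈ Submodule.map φ B := Submodule.mem_map.mpr ⟨y, hy, rfl⟩
        rwa [hBinv'] at hmem
      have hset : X.filter (fun x => blk (span (ZMod 2) ({x, φ x} : Set (BinVec v))) = B)
          = (Finset.univ : Finset (BinVec v)).filter (fun z => z ∈ B ∧ z ∉ F) := by
        ext z
        rw [Finset.mem_filter, hX, Finset.mem_filter, Finset.mem_filter]
        constructor
        · rintro ⟨⟨-, hzF⟩, hblkz⟩
          refine ⟨Finset.mem_univ _, ?_, hzF⟩
          rw [← hblkz]
          exact (blk_spec _ (hTx2 z hzF)).2 (Submodule.subset_span (Set.mem_insert _ _))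
        · rintro ⟨-, hzB, hzF⟩
          refine ⟨⟨Finset.mem_univ _, hzF⟩, ?_⟩
          exact blk_eq _ B (hTx2 z hzF) hBD ((span_pair_le _ _ _).mpr ⟨hzB, hφB z hzB⟩)
      rw [hset]
      have h1 := card_memB_split B F
      have h2 : Nat.card B = 8 := by rw [card_submodule, hD.1 B hBD]; norm_num
      have h3 : Nat.card ↥(B ⊓ F) = 4 := by
        rw [card_submodule, hBF2 B hBD hBinv hBnle]; norm_num
      omega
    rw [Finset.sum_congr rfl hfiber, Finset.sum_const, smul_eq_mul] at hXcard
    have hXF := Finset.card_filter_add_card_filter_not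
      (s := (Finset.univ : Finset (BinVec v))) (p := fun x => x ∈ F)
    have hXF' : ((Finset.univ : Finset (BinVec v)).filter (fun x => ¬ x ∈ F)).card = X.card := rfl
    have hFcard : ((Finset.univ : Finset (BinVec v)).filter (fun x => x ∈ F)).card = 2 ^ f := by
      rw [filter_mem_card, card_submodule]
    have huniv : (Finset.univ : Finset (BinVec v)).card = 2 ^ v := by
      rw [Finset.card_univ, card_eq_pow_finrank (K := ZMod 2) (V := BinVec v),
        ZMod.card, finrank_fin_fun]
    omega
  -- equation 1
  have heq1 : (2 ^ f - 1) * (2 ^ f - 2) = 42 * Ba.card + 6 * B2.card := by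
    set S := ((Finset.univ : Finset (BinVec v × BinVec v)).filter
      (fun p => p.1 ∈ F ∧ p.2 ∈ F ∧ p.1 ≠ 0 ∧ p.2 ≠ 0 ∧ p.1 ≠ p.2)) with hS
    have hScard : S.card = (2 ^ f - 1) * (2 ^ f - 2) := by
      rw [hS, card_pairs, card_submodule]
    have hdisj : Disjoint Ba B2 := by
      rw [Finset.disjoint_left]
      intro B h1 h2
      rw [hBa, Finset.mem_filter] at h1
      rw [hB2, Finset.mem_filter] at h2
      exact h2.2.2.2 h1.2.2
    have hmaps : ∀ p ∈ S, blk (span (ZMod 2) ({p.1, p.2} : Set (BinVec v))) ∈ Ba ∪ B2 := by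
      intro p hp
      rw [hS, Finset.mem_filter] at hp
      obtain ⟨-, h1F, h2F, h10, h20, hne⟩ := hp
      have hT2 : finrank (ZMod 2) (span (ZMod 2) ({p.1, p.2} : Set (BinVec v))) = 2 :=
        finrank_span_pair _ _ h10 h20 hne
      have hTF : span (ZMod 2) ({p.1, p.2} : Set (BinVec v)) ≤ F :=
        (span_pair_le _ _ _).mpr ⟨h1F, h2F⟩
      have hBD := (blk_spec _ hT2).1
      have hinv := h_blk_inv _ hT2 (h_fix_inv _ hTF)
      rw [Finset.mem_union]
      by_cases hle : blk (span (ZMod 2) ({p.1, p.2} : Set (BinVec v))) ≤ F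
      · left; rw [hBa, Finset.mem_filter]; exact ⟨Finset.mem_univ _, hBD, hle⟩
      · right; rw [hB2, Finset.mem_filter]; exact ⟨Finset.mem_univ _, hBD, hinv, hle⟩
    have hsum := Finset.card_eq_sum_card_fiberwise hmaps
    rw [Finset.sum_union hdisj] at hsum
    have hfibA : ∀ B ∈ Ba, (S.filter
        (fun p => blk (span (ZMod 2) ({p.1, p.2} : Set (BinVec v))) = B)).card = 42 := by
      intro B hBmem
      rw [hBa, Finset.mem_filter] at hBmem
      obtain ⟨-, hBD, hBle⟩ := hBmem
      have hset : S.filter (fun p => blk (span (ZMod 2) ({p.1, p.2} : Set (BinVec v))) = B)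
          = (Finset.univ : Finset (BinVec v × BinVec v)).filter
            (fun p => p.1 ∈ B ∧ p.2 ∈ B ∧ p.1 ≠ 0 ∧ p.2 ≠ 0 ∧ p.1 ≠ p.2) := by
        ext p
        rw [Finset.mem_filter, hS, Finset.mem_filter, Finset.mem_filter]
        constructor
        · rintro ⟨⟨-, h1F, h2F, h10, h20, hne⟩, hblkp⟩
          have hT2 := finrank_span_pair p.1 p.2 h10 h20 hne
          have hle := (blk_spec _ hT2).2
          rw [hblkp] at hle
          have h12B := (span_pair_le _ _ _).mp hle
          exact ⟨Finset.mem_univ _, h12B.1, h12B.2, h10, h20, hne⟩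
        · rintro ⟨-, h1B, h2B, h10, h20, hne⟩
          have hT2 := finrank_span_pair p.1 p.2 h10 h20 hne
          refine ⟨⟨Finset.mem_univ _, hBle h1B, hBle h2B, h10, h20, hne⟩, ?_⟩
          exact blk_eq _ B hT2 hBD ((span_pair_le _ _ _).mpr ⟨h1B, h2B⟩)
      rw [hset, card_pairs,
        show Nat.card B = 8 from by rw [card_submodule, hD.1 B hBD]; norm_num]
    have hfibB : ∀ B ∈ B2, (S.filter
        (fun p => blk (span (ZMod 2) ({p.1, p.2} : Set (BinVec v))) = B)).card = 6 := by
      intro B hBmem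
      rw [hB2, Finset.mem_filter] at hBmem
      obtain ⟨-, hBD, hBinv, hBnle⟩ := hBmem
      have hset : S.filter (fun p => blk (span (ZMod 2) ({p.1, p.2} : Set (BinVec v))) = B)
          = (Finset.univ : Finset (BinVec v × BinVec v)).filter
            (fun p => p.1 ∈ (B ⊓ F) ∧ p.2 ∈ (B ⊓ F) ∧ p.1 ≠ 0 ∧ p.2 ≠ 0 ∧ p.1 ≠ p.2) := by
        ext p
        rw [Finset.mem_filter, hS, Finset.mem_filter, Finset.mem_filter]
        constructor
        · rintro ⟨⟨-, h1F, h2F, h10, h20, hne⟩, hblkp⟩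
          have hT2 := finrank_span_pair p.1 p.2 h10 h20 hne
          have hle := (blk_spec _ hT2).2
          rw [hblkp] at hle
          have h12B := (span_pair_le _ _ _).mp hle
          exact ⟨Finset.mem_univ _, Submodule.mem_inf.mpr ⟨h12B.1, h1F⟩,
            Submodule.mem_inf.mpr ⟨h12B.2, h2F⟩, h10, h20, hne⟩
        · rintro ⟨-, h1BF, h2BF, h10, h20, hne⟩
          have h1B := Submodule.mem_inf.mp h1BF
          have h2B := Submodule.mem_inf.mp h2BF
          have hT2 := finrank_span_pair p.1 p.2 h10 h20 hne
          refine ⟨⟨Finset.mem_univ _, h1B.2, h2B.2, h10, h20, hne⟩, ?_⟩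
          exact blk_eq _ B hT2 hBD ((span_pair_le _ _ _).mpr ⟨h1B.1, h2B.1⟩)
      rw [hset, card_pairs,
        show Nat.card ↥(B ⊓ F) = 4 from by
          rw [card_submodule, hBF2 B hBD hBinv hBnle]; norm_num]
    rw [Finset.sum_congr rfl hfibA, Finset.sum_congr rfl hfibB,
      Finset.sum_const, Finset.sum_const, smul_eq_mul, smul_eq_mul] at hsum
    rw [← hScard, hsum]
    ring
  exact ⟨Ba.card, B2.card, heq1, heq2⟩

/-- automorphisms of order 2 of an `S_2[2,3,v]` with `v ≡ 1 (mod 6)`. -/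
theorem stmt1 (v : ℕ) (hv7 : 7 ≤ v) (hv : v % 6 = 1)
    (D : Set (Submodule (ZMod 2) (BinVec v))) (hD : IsSteinerTriple v D)
    (A : GL (Fin v) (ZMod 2)) (hAut : IsAutM v A.val D)
    (hA2 : A ^ 2 = 1) (hA1 : A ≠ 1) :
    ∃ s : ℕ, 1 ≤ s ∧ s ≤ v / 2 ∧ 3 ∣ s ∧ ConjGL v A.val (Avs v s) := by
  classical
  have hφφ : ∀ x : BinVec v, Matrix.vecMulLinear A.val (Matrix.vecMulLinear A.val x) = x := by
    intro x
    have h2 : A.val * A.val = 1 := by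
      have hc := congrArg Units.val hA2
      rwa [pow_two, Units.val_mul] at hc
    rw [Matrix.vecMulLinear_apply, Matrix.vecMulLinear_apply, Matrix.vecMul_vecMul, h2,
      Matrix.vecMul_one]
  set s := finrank (ZMod 2) (LinearMap.range (Matrix.vecMulLinear A.val - LinearMap.id)) with hsdef
  set f := finrank (ZMod 2) (LinearMap.ker (Matrix.vecMulLinear A.val - LinearMap.id)) with hfdef
  have hsf : s + f = v := by
    have h := LinearMap.finrank_range_add_finrank_ker
      (Matrix.vecMulLinear A.val - LinearMap.id (R := ZMod 2) (M := BinVec v))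
    rw [finrank_fin_fun] at h
    exact h
  obtain ⟨h2s, hconj⟩ := involution_conj v A (by omega) hφφ
  have hs1 : 1 ≤ s := by
    by_contra hcon
    push_neg at hcon
    apply hA1
    have hs0 : s = 0 := by omega
    have hbot : LinearMap.range (Matrix.vecMulLinear A.val
        - LinearMap.id (R := ZMod 2) (M := BinVec v)) = ⊥ :=
      Submodule.finrank_eq_zero.mp hs0
    have hid : ∀ x : BinVec v, Matrix.vecMulLinear A.val x = x := by
      intro x
      have hx : (Matrix.vecMulLinear A.val - LinearMap.id (R := ZMod 2) (M := BinVec v)) x = 0 := by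
        have hmem := LinearMap.mem_range_self
          (Matrix.vecMulLinear A.val - LinearMap.id (R := ZMod 2) (M := BinVec v)) x
        rwa [hbot, Submodule.mem_bot] at hmem
      rw [LinearMap.sub_apply, LinearMap.id_apply, sub_eq_zero] at hx
      exact hx
    apply Units.ext
    show A.val = 1
    ext i j
    have h := congrFun (hid (Pi.single i 1)) j
    rw [Matrix.vecMulLinear_apply, Matrix.single_vecMul] at h
    have h' : A.val i j = (Pi.single i 1 : BinVec v) j := by
      simpa using h
    rw [h', Matrix.one_apply, Pi.single_apply]
    by_cases hij : i = j
    · simp [hij]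
    · simp [hij, Ne.symm hij]
  obtain ⟨a, b, heq1, heq2⟩ := counting v D hD A hAut hφφ
  have hf2 : 2 ≤ f := by omega
  have hdvd : 3 ∣ (v - f) := arith7 v f a b (by omega) (by omega) hf2 heq1 heq2
  have hvf : v - f = s := by omega
  rw [hvf] at hdvd
  exact ⟨s, hs1, by omega, hdvd, hconj⟩
end

section
/- Let v ≥ 7 with v ≡ 3 (mod 6), let D be a binary q-Steiner triple system S_2[2,3,v], and let A in GL(v, F_2) be an automorphism of D with A² = 1 and A ≠ 1. Then there exists s with 1 ≤ s ≤ ⌊v/2⌋ such that s ≢ 2 (mod 3) and A is conjugate in GL(v, F_2) to the matrix A_{v,s}. -/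
attribute [local instance] Classical.propDecidable

namespace QSteiner

open Matrix Module Finset

variable {v : ℕ}

lemma two_torsion (x : BinVec v) : x + x = 0 := by
  funext i
  show x i + x i = 0
  have : ∀ a : ZMod 2, a + a = 0 := by decide
  exact this _

lemma sub_eq_add' (x y : BinVec v) : x - y = x + y := by
  funext i
  show x i - y i = x i + y i
  have : ∀ a b : ZMod 2, a - b = a + b := by decide
  exact this _ _

lemma add_eq_zero_iff (x y : BinVec v) : x + y = 0 ↔ x = y := by
  constructor
  · intro h
    have h2 : x + (y + y) = 0 + y := by rw [← add_assoc, h, zero_add]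
    rw [two_torsion y, add_zero, zero_add] at h2
    exact h2
  · rintro rfl; exact two_torsion x

instance : Finite (Submodule (ZMod 2) (BinVec v)) :=
  Finite.of_injective (fun U => (U : Set (BinVec v))) SetLike.coe_injective

noncomputable instance : Fintype (Submodule (ZMod 2) (BinVec v)) :=
  Fintype.ofFinite _

/-- The finset of elements of a submodule. -/
noncomputable def elts (U : Submodule (ZMod 2) (BinVec v)) : Finset (BinVec v) :=
  Finset.univ.filter (fun x => x ∈ U)

lemma mem_elts {U : Submodule (ZMod 2) (BinVec v)} {x : BinVec v} :
    x ∈ elts U ↔ x ∈ U := by simp [elts]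

lemma card_elts (U : Submodule (ZMod 2) (BinVec v)) :
    (elts U).card = 2 ^ (Module.finrank (ZMod 2) U) := by
  have h1 : Fintype.card U = (elts U).card := by
    classical
    rw [elts]
    exact Fintype.card_subtype _
  have h2 : Fintype.card U = Fintype.card (ZMod 2) ^ (Module.finrank (ZMod 2) U) :=
    card_eq_pow_finrank (K := ZMod 2)
  rw [← h1, h2, ZMod.card]

lemma elts_mono {U U' : Submodule (ZMod 2) (BinVec v)} (h : U ≤ U') : elts U ⊆ elts U' := by
  intro x hx; rw [mem_elts] at *; exact h hx

lemma eq_of_le_of_card_le {U U' : Submodule (ZMod 2) (BinVec v)} (h : U ≤ U')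
    (hc : (elts U').card ≤ (elts U).card) : U = U' := by
  have := Finset.eq_of_subset_of_card_le (elts_mono h) hc
  apply SetLike.coe_injective
  ext x
  constructor
  · intro hx; exact mem_elts.mp (this ▸ mem_elts.mpr hx)
  · intro hx; exact mem_elts.mp (this ▸ mem_elts.mpr hx)

lemma span_pair_set (x y : BinVec v) :
    ((Submodule.span (ZMod 2) {x, y} : Submodule (ZMod 2) (BinVec v)) : Set (BinVec v))
      = {0, x, y, x + y} := by
  ext z
  simp only [SetLike.mem_coe, Submodule.mem_span_pair, Set.mem_insert_iff, Set.mem_singleton_iff]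
  have hz : ∀ a : ZMod 2, a = 0 ∨ a = 1 := by decide
  constructor
  · rintro ⟨a, b, rfl⟩
    rcases hz a with ha | ha <;> rcases hz b with hb | hb <;>
      simp [ha, hb]
  · rintro (rfl | rfl | rfl | rfl)
    · exact ⟨0, 0, by simp⟩
    · exact ⟨1, 0, by simp⟩
    · exact ⟨0, 1, by simp⟩
    · exact ⟨1, 1, by simp⟩


lemma elts_span_pair {x y : BinVec v} (hx : x ≠ 0) (hy : y ≠ 0) (hxy : x ≠ y) :
    elts (Submodule.span (ZMod 2) {x, y}) = {0, x, y, x + y} := by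
  ext z
  rw [mem_elts]
  have := span_pair_set (v := v) x y
  have hz : z ∈ Submodule.span (ZMod 2) {x, y} ↔ z ∈ ({0, x, y, x + y} : Set (BinVec v)) := by
    rw [← this]; rfl
  rw [hz]
  simp [Set.mem_insert_iff, Finset.mem_insert]

lemma card_four {x y : BinVec v} (hx : x ≠ 0) (hy : y ≠ 0) (hxy : x ≠ y) :
    ({0, x, y, x + y} : Finset (BinVec v)).card = 4 := by
  have h1 : x + y ≠ 0 := fun h => hxy (add_eq_zero_iff x y |>.mp h)
  have h2 : x + y ≠ x := by
    intro h
    have : x + y = x + 0 := by rw [add_zero]; exact h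
    exact hy (add_left_cancel this)
  have h3 : x + y ≠ y := by
    intro h
    have : x + y = 0 + y := by rw [zero_add]; exact h
    exact hx (add_right_cancel this)
  rw [Finset.card_insert_of_notMem (by simp [Ne.symm hx, Ne.symm hy, Ne.symm h1]),
      Finset.card_insert_of_notMem (by simp [hxy, Ne.symm h2]),
      Finset.card_insert_of_notMem (by simp [Ne.symm h3]),
      Finset.card_singleton]

lemma card_elts_span_pair {x y : BinVec v} (hx : x ≠ 0) (hy : y ≠ 0) (hxy : x ≠ y) :
    (elts (Submodule.span (ZMod 2) {x, y})).card = 4 := by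
  rw [elts_span_pair hx hy hxy, card_four hx hy hxy]

lemma finrank_span_pair {x y : BinVec v} (hx : x ≠ 0) (hy : y ≠ 0) (hxy : x ≠ y) :
    Module.finrank (ZMod 2) (Submodule.span (ZMod 2) {x, y} : Submodule (ZMod 2) (BinVec v)) = 2 := by
  have h := card_elts_span_pair (v := v) hx hy hxy
  rw [card_elts] at h
  have : (4 : ℕ) = 2 ^ 2 := rfl
  rw [this] at h
  exact Nat.pow_right_injective (le_refl 2) h

lemma card_elts_rank2 {T : Submodule (ZMod 2) (BinVec v)} (hT : Module.finrank (ZMod 2) T = 2) :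
    (elts T).card = 4 := by
  rw [card_elts, hT]; rfl

lemma mem_span_pair_left (x y : BinVec v) : x ∈ Submodule.span (ZMod 2) {x, y} :=
  Submodule.subset_span (by simp)

lemma mem_span_pair_right (x y : BinVec v) : y ∈ Submodule.span (ZMod 2) {x, y} :=
  Submodule.subset_span (by simp)

/-- The nonzero elements of a submodule. -/
noncomputable def nz (U : Submodule (ZMod 2) (BinVec v)) : Finset (BinVec v) :=
  (elts U).erase 0

lemma mem_nz {U : Submodule (ZMod 2) (BinVec v)} {x : BinVec v} :
    x ∈ nz U ↔ x ∈ U ∧ x ≠ 0 := by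
  simp [nz, mem_elts, and_comm]

lemma card_nz (U : Submodule (ZMod 2) (BinVec v)) :
    (nz U).card = 2 ^ (Module.finrank (ZMod 2) U) - 1 := by
  rw [nz, Finset.card_erase_of_mem (mem_elts.mpr (zero_mem U)), card_elts]

/-- The set of 2-dimensional subspaces of `U`. -/
noncomputable def lines (U : Submodule (ZMod 2) (BinVec v)) :
    Finset (Submodule (ZMod 2) (BinVec v)) :=
  Finset.univ.filter (fun T => T ≤ U ∧ Module.finrank (ZMod 2) T = 2)

lemma mem_lines {U T : Submodule (ZMod 2) (BinVec v)} :
    T ∈ lines U ↔ T ≤ U ∧ Module.finrank (ZMod 2) T = 2 := by simp [lines]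


lemma span_mem_lines {U : Submodule (ZMod 2) (BinVec v)} {x y : BinVec v}
    (hxU : x ∈ U) (hyU : y ∈ U) (hx : x ≠ 0) (hy : y ≠ 0) (hxy : x ≠ y) :
    Submodule.span (ZMod 2) {x, y} ∈ lines U := by
  rw [mem_lines]
  refine ⟨Submodule.span_le.mpr ?_, finrank_span_pair hx hy hxy⟩
  intro z hz
  rcases hz with rfl | hz
  · exact hxU
  · rcases hz with rfl; exact hyU

lemma fiber_eq_offDiag {U T : Submodule (ZMod 2) (BinVec v)} (hT : T ∈ lines U) :
    ((nz U).offDiag.filter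
      (fun p => Submodule.span (ZMod 2) {p.1, p.2} = T)) = (nz T).offDiag := by
  rw [mem_lines] at hT
  ext p
  simp only [Finset.mem_filter, Finset.mem_offDiag, mem_nz]
  constructor
  · rintro ⟨⟨⟨h1U, h10⟩, ⟨h2U, h20⟩, hne⟩, hspan⟩
    exact ⟨⟨hspan ▸ mem_span_pair_left p.1 p.2, h10⟩,
           ⟨hspan ▸ mem_span_pair_right p.1 p.2, h20⟩, hne⟩
  · rintro ⟨⟨h1T, h10⟩, ⟨h2T, h20⟩, hne⟩
    have hle : Submodule.span (ZMod 2) {p.1, p.2} ≤ T := by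
      rw [Submodule.span_le]
      rintro z (rfl | hz)
      · exact h1T
      · rcases hz with rfl; exact h2T
    have heq : Submodule.span (ZMod 2) {p.1, p.2} = T :=
      Submodule.eq_of_le_of_finrank_le hle
        (by rw [hT.2, finrank_span_pair h10 h20 hne])
    exact ⟨⟨⟨hT.1 h1T, h10⟩, ⟨hT.1 h2T, h20⟩, hne⟩, heq⟩

lemma offDiag_card_nz (U : Submodule (ZMod 2) (BinVec v)) :
    (nz U).offDiag.card
      = (2 ^ (Module.finrank (ZMod 2) U) - 1) * (2 ^ (Module.finrank (ZMod 2) U) - 2) := by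
  rw [Finset.offDiag_card, card_nz]
  have h1 : 1 ≤ 2 ^ (Module.finrank (ZMod 2) U) := Nat.one_le_two_pow
  set c := 2 ^ (Module.finrank (ZMod 2) U) with hc
  rcases Nat.exists_eq_add_of_le h1 with ⟨n, hn⟩
  have e1 : c - 1 = n := by omega
  rw [e1]
  rcases n with _ | k
  · simp
  · have e2 : c - 2 = k := by omega
    rw [e2, Nat.mul_succ, Nat.add_sub_cancel]

lemma six_mul_card_lines (U : Submodule (ZMod 2) (BinVec v)) :
    6 * (lines U).card
      = (2 ^ (Module.finrank (ZMod 2) U) - 1) * (2 ^ (Module.finrank (ZMod 2) U) - 2) := by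
  rw [← offDiag_card_nz]
  have hmem : ∀ p ∈ (nz U).offDiag,
      Submodule.span (ZMod 2) {(p : (BinVec v) × (BinVec v)).1, p.2} ∈ lines U := by
    rintro ⟨a, b⟩ hp
    rw [Finset.mem_offDiag] at hp
    obtain ⟨ha, hb, hab⟩ := hp
    rw [mem_nz] at ha hb
    exact span_mem_lines ha.1 hb.1 ha.2 hb.2 hab
  rw [Finset.card_eq_sum_card_fiberwise hmem]
  rw [Finset.sum_congr rfl (fun T hT => ?_), Finset.sum_const, smul_eq_mul, mul_comm]
  rw [fiber_eq_offDiag hT, Finset.offDiag_card, card_nz,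
      (mem_lines.mp hT).2]
  rfl


/-- The unique block containing a 2-dimensional subspace. -/
noncomputable def blockOf {D : Set (Submodule (ZMod 2) (BinVec v))}
    (hD : IsSteinerTriple v D) (T : Submodule (ZMod 2) (BinVec v)) :
    Submodule (ZMod 2) (BinVec v) :=
  if h : Module.finrank (ZMod 2) T = 2 then (hD.2 T h).exists.choose else ⊥

lemma blockOf_spec {D : Set (Submodule (ZMod 2) (BinVec v))}
    (hD : IsSteinerTriple v D) {T : Submodule (ZMod 2) (BinVec v)}
    (hT : Module.finrank (ZMod 2) T = 2) :
    blockOf hD T ∈ D ∧ T ≤ blockOf hD T := by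
  rw [blockOf, dif_pos hT]
  exact (hD.2 T hT).exists.choose_spec

lemma blockOf_eq {D : Set (Submodule (ZMod 2) (BinVec v))}
    (hD : IsSteinerTriple v D) {T B : Submodule (ZMod 2) (BinVec v)}
    (hT : Module.finrank (ZMod 2) T = 2) (hB : B ∈ D) (hTB : T ≤ B) :
    B = blockOf hD T :=
  (hD.2 T hT).unique ⟨hB, hTB⟩ (blockOf_spec hD hT)

/-- The fixed space of the matrix `M` acting by `x ↦ x ᵥ* M`. -/
def Fix (M : Matrix (Fin v) (Fin v) (ZMod 2)) : Submodule (ZMod 2) (BinVec v) :=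
  LinearMap.ker (M.vecMulLinear - LinearMap.id)

lemma mem_fix {M : Matrix (Fin v) (Fin v) (ZMod 2)} {x : BinVec v} :
    x ∈ Fix M ↔ x ᵥ* M = x := by
  simp [Fix, LinearMap.mem_ker, sub_eq_zero]

lemma subApply_of_fixed {M : Matrix (Fin v) (Fin v) (ZMod 2)}
    {T : Submodule (ZMod 2) (BinVec v)} (hT : T ≤ Fix M) :
    subApply v M T = T := by
  apply le_antisymm
  · rintro y ⟨x, hx, rfl⟩
    simpa [Matrix.vecMulLinear_apply, mem_fix.mp (hT hx)] using hx
  · intro x hx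
    exact ⟨x, hx, by simp [Matrix.vecMulLinear_apply, mem_fix.mp (hT hx)]⟩

lemma mem_of_invariant {M : Matrix (Fin v) (Fin v) (ZMod 2)}
    {B : Submodule (ZMod 2) (BinVec v)} (hB : subApply v M B = B)
    {x : BinVec v} (hx : x ∈ B) : x ᵥ* M ∈ B := by
  have : x ᵥ* M ∈ subApply v M B := ⟨x, hx, by simp [Matrix.vecMulLinear_apply]⟩
  rwa [hB] at this

lemma subApply_mem_D {D : Set (Submodule (ZMod 2) (BinVec v))}
    {M : Matrix (Fin v) (Fin v) (ZMod 2)} (hAut : IsAutM v M D)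
    {B : Submodule (ZMod 2) (BinVec v)} (hB : B ∈ D) : subApply v M B ∈ D := by
  rw [← hAut]
  exact Set.mem_image_of_mem _ hB

lemma blockOf_invariant {D : Set (Submodule (ZMod 2) (BinVec v))}
    (hD : IsSteinerTriple v D) {M : Matrix (Fin v) (Fin v) (ZMod 2)}
    (hAut : IsAutM v M D) {T : Submodule (ZMod 2) (BinVec v)}
    (hT : Module.finrank (ZMod 2) T = 2) (hTinv : subApply v M T = T) :
    subApply v M (blockOf hD T) = blockOf hD T := by
  have h1 := blockOf_spec hD hT
  have h2 : T ≤ subApply v M (blockOf hD T) := by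
    conv_lhs => rw [← hTinv]
    exact Submodule.map_mono h1.2
  exact blockOf_eq hD hT (subApply_mem_D hAut h1.1) h2

lemma vecMul_invol {M : Matrix (Fin v) (Fin v) (ZMod 2)} (hM2 : M * M = 1)
    (x : BinVec v) : (x ᵥ* M) ᵥ* M = x := by
  rw [Matrix.vecMul_vecMul, hM2, Matrix.vecMul_one]

lemma half_inter_rank {D : Set (Submodule (ZMod 2) (BinVec v))}
    (hD : IsSteinerTriple v D) {M : Matrix (Fin v) (Fin v) (ZMod 2)}
    (hM2 : M * M = 1) {B : Submodule (ZMod 2) (BinVec v)} (hB : B ∈ D)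
    (hBinv : subApply v M B = B) (hBF : ¬ B ≤ Fix M) :
    Module.finrank (ZMod 2) (B ⊓ Fix M : Submodule (ZMod 2) (BinVec v)) = 2 := by
  have hB3 : Module.finrank (ZMod 2) B = 3 := hD.1 B hB
  have hcard8 : (elts B).card = 8 := by rw [card_elts, hB3]; rfl
  -- pick x₀ ∈ B \ Fix M
  obtain ⟨x₀, hx₀B, hx₀F⟩ : ∃ x, x ∈ B ∧ x ∉ Fix M := by
    by_contra h
    push_neg at h
    exact hBF (fun x hx => h x hx)
  set w := x₀ + x₀ ᵥ* M with hw
  have hwB : w ∈ B := add_mem hx₀B (mem_of_invariant hBinv hx₀B)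
  have hwF : w ∈ Fix M := by
    rw [mem_fix, hw, Matrix.add_vecMul, vecMul_invol hM2, add_comm]
  have hw0 : w ≠ 0 := by
    intro h
    exact hx₀F (mem_fix.mpr ((add_eq_zero_iff _ _).mp h).symm)
  -- generic: for x in B \ F, x + x ᵥ* M is a nonzero element of B ⊓ F
  have hgen : ∀ x, x ∈ B → x ∉ Fix M →
      x + x ᵥ* M ∈ B ⊓ Fix M ∧ x + x ᵥ* M ≠ 0 := by
    intro x hxB hxF
    refine ⟨Submodule.mem_inf.mpr ⟨add_mem hxB (mem_of_invariant hBinv hxB), ?_⟩, ?_⟩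
    · rw [mem_fix, Matrix.add_vecMul, vecMul_invol hM2, add_comm]
    · intro h
      exact hxF (mem_fix.mpr ((add_eq_zero_iff _ _).mp h).symm)
  by_cases hsmall : ∀ u, u ∈ B ⊓ Fix M → u = 0 ∨ u = w
  · -- then B has at most 4 elements, contradiction with 8
    exfalso
    have hsub : elts B ⊆ ({0, w, x₀, x₀ + w} : Finset (BinVec v)) := by
      intro x hx
      rw [mem_elts] at hx
      by_cases hxF : x ∈ Fix M
      · rcases hsmall x (Submodule.mem_inf.mpr ⟨hx, hxF⟩) with rfl | rfl <;> simp
      · -- x + x₀ ∈ B ⊓ F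
        have hxw : x + x ᵥ* M = w := by
          rcases hsmall _ (hgen x hx hxF).1 with h | h
          · exact absurd h (hgen x hx hxF).2
          · exact h
        have hx₀w : x₀ + x₀ ᵥ* M = w := rfl
        have hsum : x + x₀ ∈ B ⊓ Fix M := by
          refine Submodule.mem_inf.mpr ⟨add_mem hx hx₀B, mem_fix.mpr ?_⟩
          rw [Matrix.add_vecMul]
          have e1 : x ᵥ* M = x + w := by
            rw [← hxw]; rw [← add_assoc, two_torsion, zero_add]
          have e2 : x₀ ᵥ* M = x₀ + w := by
            rw [← hx₀w]; rw [← add_assoc, two_torsion, zero_add]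
          rw [e1, e2]
          calc x + w + (x₀ + w) = x + x₀ + (w + w) := by abel
          _ = x + x₀ := by rw [two_torsion, add_zero]
        rcases hsmall _ hsum with h | h
        · have : x = x₀ := (add_eq_zero_iff _ _).mp h
          simp [this]
        · have hxval : x₀ + w = x := by
            rw [← h]
            calc x₀ + (x + x₀) = x + (x₀ + x₀) := by abel
            _ = x := by rw [two_torsion, add_zero]
          simp [← hxval]
    have hle : (elts B).card ≤ 4 := by
      calc (elts B).card ≤ ({0, w, x₀, x₀ + w} : Finset (BinVec v)).card :=
            Finset.card_le_card hsub
      _ ≤ 4 := by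
            apply le_trans (Finset.card_insert_le _ _)
            apply Nat.succ_le_succ
            apply le_trans (Finset.card_insert_le _ _)
            apply Nat.succ_le_succ
            apply le_trans (Finset.card_insert_le _ _)
            apply Nat.succ_le_succ
            simp
    omega
  · push_neg at hsmall
    obtain ⟨u, huBF, hu0, huw⟩ := hsmall
    -- {0, w, u, u+w} ⊆ B ⊓ F so card ≥ 4, rank ≥ 2
    have hwBF : w ∈ B ⊓ Fix M := Submodule.mem_inf.mpr ⟨hwB, hwF⟩
    have h4 : ({0, w, u, w + u} : Finset (BinVec v)) ⊆ elts (B ⊓ Fix M) := by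
      intro z hz
      rw [mem_elts]
      simp only [Finset.mem_insert, Finset.mem_singleton] at hz
      rcases hz with rfl | rfl | rfl | rfl
      · exact zero_mem _
      · exact hwBF
      · exact huBF
      · exact add_mem hwBF huBF
    have hcard4 : (4 : ℕ) ≤ (elts (B ⊓ Fix M)).card := by
      calc (4:ℕ) = ({0, w, u, w + u} : Finset (BinVec v)).card :=
        (card_four hw0 hu0 (Ne.symm huw)).symm
      _ ≤ _ := Finset.card_le_card h4
    rw [card_elts] at hcard4
    have hlt : Module.finrank (ZMod 2) (B ⊓ Fix M : Submodule (ZMod 2) (BinVec v)) <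
        Module.finrank (ZMod 2) B := by
      apply Submodule.finrank_lt_finrank_of_lt
      rcases lt_or_eq_of_le (inf_le_left : B ⊓ Fix M ≤ B) with h | h
      · exact h
      · exfalso
        apply hBF
        intro x hx
        have hx' : x ∈ B ⊓ Fix M := by rw [h]; exact hx
        exact (Submodule.mem_inf.mp hx').2
    rw [hB3] at hlt
    have h2r : 2 ≤ Module.finrank (ZMod 2) (B ⊓ Fix M : Submodule (ZMod 2) (BinVec v)) := by
      have h4' : (2:ℕ)^2 ≤ 2 ^ Module.finrank (ZMod 2) (B ⊓ Fix M : Submodule (ZMod 2) (BinVec v)) := hcard4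
      rwa [Nat.pow_le_pow_iff_right one_lt_two] at h4'
    omega


section Count

variable {D : Set (Submodule (ZMod 2) (BinVec v))} {M : Matrix (Fin v) (Fin v) (ZMod 2)}

/-- Blocks contained in the fixed space. -/
noncomputable def fullB (D : Set (Submodule (ZMod 2) (BinVec v)))
    (M : Matrix (Fin v) (Fin v) (ZMod 2)) : Finset (Submodule (ZMod 2) (BinVec v)) :=
  Finset.univ.filter (fun B => B ∈ D ∧ B ≤ Fix M)

/-- Invariant blocks not contained in the fixed space. -/
noncomputable def halfB (D : Set (Submodule (ZMod 2) (BinVec v)))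
    (M : Matrix (Fin v) (Fin v) (ZMod 2)) : Finset (Submodule (ZMod 2) (BinVec v)) :=
  Finset.univ.filter (fun B => B ∈ D ∧ subApply v M B = B ∧ ¬ B ≤ Fix M)

lemma lines_eq_full_half (hD : IsSteinerTriple v D) (hAut : IsAutM v M D)
    (hM2 : M * M = 1) :
    (lines (Fix M)).card = 7 * (fullB D M).card + (halfB D M).card := by
  classical
  have hmem : ∀ T ∈ lines (Fix M), blockOf hD T ∈ fullB D M ∪ halfB D M := by
    intro T hT
    rw [mem_lines] at hT
    have hinv : subApply v M T = T := subApply_of_fixed hT.1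
    have hBinv := blockOf_invariant hD hAut hT.2 hinv
    have hBD := (blockOf_spec hD hT.2).1
    rw [Finset.mem_union, fullB, halfB]
    by_cases h : blockOf hD T ≤ Fix M
    · exact Or.inl (by simp [h, hBD])
    · exact Or.inr (by simp [h, hBD, hBinv])
  rw [Finset.card_eq_sum_card_fiberwise hmem]
  have hdisj : Disjoint (fullB D M) (halfB D M) := by
    rw [Finset.disjoint_left]
    intro B hB hB'
    simp only [fullB, halfB, Finset.mem_filter] at hB hB'
    exact hB'.2.2.2 hB.2.2
  rw [Finset.sum_union hdisj]
  have hfull : ∀ B ∈ fullB D M,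
      ((lines (Fix M)).filter (fun T => blockOf hD T = B)).card = 7 := by
    intro B hB
    simp only [fullB, Finset.mem_filter] at hB
    obtain ⟨-, hBD, hBF⟩ := hB
    have heq : (lines (Fix M)).filter (fun T => blockOf hD T = B) = lines B := by
      ext T
      simp only [Finset.mem_filter, mem_lines]
      constructor
      · rintro ⟨⟨hTF, hT2⟩, hb⟩
        exact ⟨hb ▸ (blockOf_spec hD hT2).2, hT2⟩
      · rintro ⟨hTB, hT2⟩
        exact ⟨⟨le_trans hTB hBF, hT2⟩, (blockOf_eq hD hT2 hBD hTB).symm⟩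
    rw [heq]
    have h6 := six_mul_card_lines B
    rw [hD.1 B hBD] at h6
    norm_num at h6
    omega
  have hhalf : ∀ B ∈ halfB D M,
      ((lines (Fix M)).filter (fun T => blockOf hD T = B)).card = 1 := by
    intro B hB
    simp only [halfB, Finset.mem_filter] at hB
    obtain ⟨-, hBD, hBinv, hBF⟩ := hB
    have hrank2 := half_inter_rank hD hM2 hBD hBinv hBF
    have heq : (lines (Fix M)).filter (fun T => blockOf hD T = B) = {B ⊓ Fix M} := by
      ext T
      simp only [Finset.mem_filter, mem_lines, Finset.mem_singleton]
      constructor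
      · rintro ⟨⟨hTF, hT2⟩, hb⟩
        have hTB : T ≤ B := hb ▸ (blockOf_spec hD hT2).2
        have hle : T ≤ B ⊓ Fix M := le_inf hTB hTF
        exact Submodule.eq_of_le_of_finrank_le hle (by rw [hrank2, hT2])
      · rintro rfl
        refine ⟨⟨inf_le_right, hrank2⟩, (blockOf_eq hD hrank2 hBD inf_le_left).symm⟩
    rw [heq, Finset.card_singleton]
  rw [Finset.sum_congr rfl hfull, Finset.sum_congr rfl hhalf,
      Finset.sum_const, Finset.sum_const, smul_eq_mul, smul_eq_mul, mul_comm, mul_one]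

lemma outside_eq_four_half (hD : IsSteinerTriple v D) (hAut : IsAutM v M D)
    (hM2 : M * M = 1) :
    2 ^ v = 2 ^ (Module.finrank (ZMod 2) (Fix M)) + 4 * (halfB D M).card := by
  classical
  have hcardV : (Finset.univ : Finset (BinVec v)).card = 2 ^ v := by
    simp [Finset.card_univ]
  have h0 : (elts (Fix M)).card
      + ((Finset.univ : Finset (BinVec v)).filter (fun x => ¬ x ∈ Fix M)).card = 2 ^ v := by
    rw [← hcardV, elts]
    exact Finset.card_filter_add_card_filter_not _
  set X := (Finset.univ : Finset (BinVec v)).filter (fun x => ¬ x ∈ Fix M) with hX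
  -- facts about x ∈ X
  have hx_facts : ∀ x : BinVec v, x ∉ Fix M →
      x ≠ 0 ∧ x ᵥ* M ≠ 0 ∧ x ≠ x ᵥ* M := by
    intro x hx
    have h1 : x ≠ 0 := by
      rintro rfl
      exact hx (mem_fix.mpr (Matrix.zero_vecMul M))
    have h2 : x ᵥ* M ≠ 0 := by
      intro h
      apply h1
      rw [← vecMul_invol hM2 x, h, Matrix.zero_vecMul]
    have h3 : x ≠ x ᵥ* M := fun h => hx (mem_fix.mpr h.symm)
    exact ⟨h1, h2, h3⟩
  have hTinv : ∀ x : BinVec v,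
      subApply v M (Submodule.span (ZMod 2) {x, x ᵥ* M}) = Submodule.span (ZMod 2) {x, x ᵥ* M} := by
    intro x
    rw [subApply, Submodule.map_span, Set.image_pair]
    simp only [Matrix.vecMulLinear_apply, vecMul_invol hM2]
    rw [Set.pair_comm]
  have hmem : ∀ x ∈ X, blockOf hD (Submodule.span (ZMod 2) {x, x ᵥ* M}) ∈ halfB D M := by
    intro x hx
    rw [hX, Finset.mem_filter] at hx
    obtain ⟨h1, h2, h3⟩ := hx_facts x hx.2
    have hT2 : Module.finrank (ZMod 2)
        (Submodule.span (ZMod 2) {x, x ᵥ* M} : Submodule (ZMod 2) (BinVec v)) = 2 :=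
      finrank_span_pair h1 h2 h3
    have hBD := (blockOf_spec hD hT2).1
    have hBinv := blockOf_invariant hD hAut hT2 (hTinv x)
    have hxB : x ∈ blockOf hD (Submodule.span (ZMod 2) {x, x ᵥ* M}) :=
      (blockOf_spec hD hT2).2 (mem_span_pair_left x _)
    rw [halfB, Finset.mem_filter]
    exact ⟨Finset.mem_univ _, hBD, hBinv, fun h => hx.2 (h hxB)⟩
  rw [Finset.card_eq_sum_card_fiberwise hmem] at h0
  have hfiber : ∀ B ∈ halfB D M,
      (X.filter (fun x => blockOf hD (Submodule.span (ZMod 2) {x, x ᵥ* M}) = B)).card = 4 := by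
    intro B hB
    simp only [halfB, Finset.mem_filter] at hB
    obtain ⟨-, hBD, hBinv, hBF⟩ := hB
    have hcard8 : (elts B).card = 8 := by rw [card_elts, hD.1 B hBD]; rfl
    have hinter : ((elts B).filter (fun x => ¬ x ∉ Fix M)).card = 4 := by
      have : (elts B).filter (fun x => ¬ x ∉ Fix M) = elts (B ⊓ Fix M) := by
        ext x
        simp only [Finset.mem_filter, mem_elts, not_not, Submodule.mem_inf]
      rw [this, card_elts, half_inter_rank hD hM2 hBD hBinv hBF]
      rfl
    have hsplit : ((elts B).filter (fun x => x ∉ Fix M)).card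
        + ((elts B).filter (fun x => ¬ x ∉ Fix M)).card = 8 := by
      rw [← hcard8]
      exact Finset.card_filter_add_card_filter_not _
    have heq : X.filter (fun x => blockOf hD (Submodule.span (ZMod 2) {x, x ᵥ* M}) = B)
        = (elts B).filter (fun x => x ∉ Fix M) := by
      ext x
      simp only [hX, Finset.mem_filter, mem_elts, Finset.mem_univ, true_and]
      constructor
      · rintro ⟨hxF, hb⟩
        exact ⟨hb ▸ (blockOf_spec hD (finrank_span_pair (hx_facts x hxF).1
            (hx_facts x hxF).2.1 (hx_facts x hxF).2.2)).2 (mem_span_pair_left x _), hxF⟩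
      · rintro ⟨hxB, hxF⟩
        obtain ⟨h1, h2, h3⟩ := hx_facts x hxF
        have hT2 : Module.finrank (ZMod 2)
            (Submodule.span (ZMod 2) {x, x ᵥ* M} : Submodule (ZMod 2) (BinVec v)) = 2 :=
          finrank_span_pair h1 h2 h3
        have hle : Submodule.span (ZMod 2) {x, x ᵥ* M} ≤ B := by
          rw [Submodule.span_le]
          rintro z (rfl | hz)
          · exact hxB
          · rcases hz with rfl
            exact mem_of_invariant hBinv hxB
        exact ⟨hxF, (blockOf_eq hD hT2 hBD hle).symm⟩
    rw [heq]
    omega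
  rw [Finset.sum_congr rfl hfiber, Finset.sum_const, smul_eq_mul] at h0
  rw [card_elts] at h0
  omega

lemma mod7_contradiction (hD : IsSteinerTriple v D) (hAut : IsAutM v M D)
    (hM2 : M * M = 1) (hf1 : 1 ≤ Module.finrank (ZMod 2) (Fix M))
    (hfmod : Module.finrank (ZMod 2) (Fix M) % 3 = 1) (hvmod : v % 3 = 0) : False := by
  classical
  set f := Module.finrank (ZMod 2) (Fix M) with hf
  have e2 := lines_eq_full_half hD hAut hM2
  have e6 := six_mul_card_lines (Fix M)
  have e1 := outside_eq_four_half hD hAut hM2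
  rw [← hf] at e6 e1
  rw [e2] at e6
  -- cast to ZMod 7
  have hpow : ∀ n : ℕ, ((2:ZMod 7))^n = 2^(n % 3) := by
    intro n
    conv_lhs => rw [← Nat.div_add_mod n 3]
    rw [pow_add, pow_mul, show ((2:ZMod 7))^3 = 1 from by decide, one_pow, one_mul]
  have h2f : ((2:ZMod 7))^f = 2 := by rw [hpow, hfmod]; norm_num
  have h2v : ((2:ZMod 7))^v = 1 := by rw [hpow, hvmod]; norm_num
  have hle1 : (1:ℕ) ≤ 2^f := Nat.one_le_two_pow
  have hle2 : (2:ℕ) ≤ 2^f := by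
    calc (2:ℕ) = 2^1 := rfl
    _ ≤ 2^f := Nat.pow_le_pow_right (by norm_num) hf1
  have c6 : ((6 * (7 * (fullB D M).card + (halfB D M).card) : ℕ) : ZMod 7)
      = (((2^f - 1) * (2^f - 2) : ℕ) : ZMod 7) := by rw [e6]
  push_cast [Nat.cast_sub hle1, Nat.cast_sub hle2] at c6
  rw [h2f] at c6
  norm_num at c6
  have h6Nh : (6:ZMod 7) * ((halfB D M).card : ZMod 7) = 0 := by
    calc (6:ZMod 7) * ((halfB D M).card : ZMod 7)
        = 6 * (7 * ((fullB D M).card : ZMod 7) + ((halfB D M).card : ZMod 7))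
          - 42 * ((fullB D M).card : ZMod 7) := by ring
    _ = 0 := by
          rw [c6, show (42:ZMod 7) = 0 from by decide]
          ring
  have hNh : ((halfB D M).card : ZMod 7) = 0 := by
    calc ((halfB D M).card : ZMod 7) = 36 * ((halfB D M).card : ZMod 7) := by
          rw [show (36:ZMod 7) = 1 from by decide, one_mul]
    _ = 6 * (6 * ((halfB D M).card : ZMod 7)) := by ring
    _ = 0 := by rw [h6Nh, mul_zero]
  have c1 : ((2^v : ℕ) : ZMod 7) = ((2^f + 4 * (halfB D M).card : ℕ) : ZMod 7) := by rw [e1]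
  push_cast at c1
  rw [h2f, h2v, hNh] at c1
  norm_num at c1
  exact absurd c1 (by decide)

end Count


section Conj
set_option synthInstance.maxHeartbeats 1000000
set_option maxHeartbeats 1600000

lemma pairSwap_invol (s i : ℕ) : pairSwap s (pairSwap s i) = i := by
  unfold pairSwap
  split_ifs <;> omega

lemma pairSwap_lt {s i v : ℕ} (h2s : 2 * s ≤ v) (hi : i < v) : pairSwap s i < v := by
  unfold pairSwap
  split_ifs <;> omega

lemma eq_add_of_add_eq {a b c : BinVec v} (h : a + b = c) : a = c + b := by
  rw [← h, add_assoc, two_torsion, add_zero]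

lemma conj_Avs (v s : ℕ) (M : Matrix (Fin v) (Fin v) (ZMod 2)) (hM2 : M * M = 1)
    (hs : Module.finrank (ZMod 2) (LinearMap.range (M.mulVecLin - LinearMap.id)) = s)
    (h2s : 2 * s ≤ v) : ConjGL v M (Avs v s) := by
  classical
  set g : BinVec v →ₗ[ZMod 2] BinVec v := M.mulVecLin - LinearMap.id with hgdef
  have hginv : ∀ x : BinVec v, M *ᵥ (M *ᵥ x) = x := by
    intro x; rw [Matrix.mulVec_mulVec, hM2, Matrix.one_mulVec]
  have hgx : ∀ x : BinVec v, g x = M *ᵥ x + x := by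
    intro x
    simp only [hgdef, LinearMap.sub_apply, Matrix.mulVecLin_apply, LinearMap.id_apply]
    exact sub_eq_add' _ _
  have habab : ∀ a b : BinVec v, a + b + (b + a) = 0 := by
    intro a b
    calc a + b + (b + a) = (a + a) + (b + b) := by abel
    _ = 0 := by rw [two_torsion, two_torsion, add_zero]
  have hgg : ∀ x : BinVec v, g (g x) = 0 := by
    intro x
    rw [hgx, hgx, Matrix.mulVec_add, hginv]
    exact habab x (M *ᵥ x)
  set W := LinearMap.range g with hWdef
  set K := LinearMap.ker g with hKdef
  have hWK : W ≤ K := by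
    rintro y ⟨u, rfl⟩
    exact LinearMap.mem_ker.mpr (hgg u)
  have hfinW : Module.finrank (ZMod 2) W = s := hs
  have hrn : Module.finrank (ZMod 2) W + Module.finrank (ZMod 2) K = v := by
    have := LinearMap.finrank_range_add_finrank_ker g
    rwa [Module.finrank_pi, Fintype.card_fin] at this
  have hfinK : Module.finrank (ZMod 2) K = v - s := by omega
  -- basis of W
  set bW := (Module.finBasis (ZMod 2) W).reindex (finCongr hfinW) with hbW
  set w : Fin s → BinVec v := fun i => (bW i : BinVec v) with hwdef
  have hwW : ∀ i, w i ∈ W := fun i => (bW i).2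
  have hw_span : Submodule.span (ZMod 2) (Set.range w) = W := by
    have h1 : Set.range w = W.subtype '' Set.range bW := by
      rw [← Set.range_comp]; rfl
    rw [h1, ← Submodule.map_span, Basis.span_eq, Submodule.map_subtype_top]
  -- preimages x i of w i
  have hxex : ∀ i, ∃ u, g u = w i := fun i => LinearMap.mem_range.mp (hwW i)
  set x : Fin s → BinVec v := fun i => (hxex i).choose with hxdef
  have hx : ∀ i, g (x i) = w i := fun i => (hxex i).choose_spec
  have hMx : ∀ i, M *ᵥ x i = x i + w i := by
    intro i
    have h := hx i
    rw [hgx] at h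
    have := eq_add_of_add_eq h
    rw [this]
    abel
  have hMfix : ∀ y : BinVec v, y ∈ K → M *ᵥ y = y := by
    intro y hy
    have h : g y = 0 := LinearMap.mem_ker.mp hy
    rw [hgx] at h
    exact (add_eq_zero_iff _ _).mp h
  -- complement of W inside K
  set W' : Submodule (ZMod 2) K := Submodule.comap K.subtype W with hW'def
  obtain ⟨C, hC⟩ := Submodule.exists_isCompl W'
  have hfinW' : Module.finrank (ZMod 2) W' = s := by
    rw [LinearEquiv.finrank_eq (Submodule.comapSubtypeEquivOfLe hWK), hfinW]
  have hfinC : Module.finrank (ZMod 2) C = v - 2 * s := by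
    have := Submodule.finrank_add_eq_of_isCompl hC
    rw [hfinW', hfinK] at this
    omega
  set bC := (Module.finBasis (ZMod 2) C).reindex (finCongr hfinC) with hbC
  set z : Fin (v - 2*s) → BinVec v := fun j => ((bC j : K) : BinVec v) with hzdef
  have hzK : ∀ j, z j ∈ K := fun j => ((bC j : K)).2
  have hz_span : ∀ y : K, y ∈ C → (y : BinVec v) ∈ Submodule.span (ZMod 2) (Set.range z) := by
    intro y hyC
    set ι : C →ₗ[ZMod 2] BinVec v := K.subtype.comp C.subtype with hι
    have h1 : (⟨y, hyC⟩ : C) ∈ Submodule.span (ZMod 2) (Set.range bC) := by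
      rw [Basis.span_eq]; trivial
    have h2 : ι ⟨y, hyC⟩ ∈ Submodule.map ι (Submodule.span (ZMod 2) (Set.range bC)) :=
      Submodule.mem_map_of_mem h1
    rw [Submodule.map_span, ← Set.range_comp] at h2
    exact h2
  -- K is inside span of w and z
  have hKspan : ∀ y : BinVec v, y ∈ K →
      y ∈ Submodule.span (ZMod 2) (Set.range w) ⊔ Submodule.span (ZMod 2) (Set.range z) := by
    intro y hy
    have hmem : (⟨y, hy⟩ : K) ∈ W' ⊔ C := by
      rw [hC.sup_eq_top]; trivial
    obtain ⟨a, ha, c, hc, hac⟩ := Submodule.mem_sup.mp hmem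
    have hy_eq : y = (a : BinVec v) + (c : BinVec v) := by
      have := congrArg (Subtype.val) hac
      exact this.symm
    rw [hy_eq]
    apply add_mem
    · apply Submodule.mem_sup_left
      rw [hw_span]
      exact ha
    · apply Submodule.mem_sup_right
      exact hz_span c hc
  -- total versions of x, w, z
  set xx : ℕ → BinVec v := fun n => if h : n < s then x ⟨n, h⟩ else 0 with hxx
  set ww : ℕ → BinVec v := fun n => if h : n < s then w ⟨n, h⟩ else 0 with hww
  set zz : ℕ → BinVec v := fun n => if h : n < v - 2*s then z ⟨n, h⟩ else 0 with hzz
  -- the candidate basis family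
  set b : Fin v → BinVec v := fun j =>
    if (j : ℕ) < 2 * s then
      (if (j:ℕ) % 2 = 0 then xx ((j:ℕ)/2) else xx ((j:ℕ)/2) + ww ((j:ℕ)/2))
    else zz ((j:ℕ) - 2*s) with hbdef
  have hb_even : ∀ (j : Fin v), (j:ℕ) < 2*s → (j:ℕ) % 2 = 0 →
      b j = xx ((j:ℕ)/2) := by
    intro j h hp; simp only [hbdef]; rw [if_pos h, if_pos hp]
  have hb_odd : ∀ (j : Fin v), (j:ℕ) < 2*s → ¬ ((j:ℕ) % 2 = 0) →
      b j = xx ((j:ℕ)/2) + ww ((j:ℕ)/2) := by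
    intro j h hp; simp only [hbdef]; rw [if_pos h, if_neg hp]
  have hb_z : ∀ (j : Fin v), ¬ ((j:ℕ) < 2*s) → b j = zz ((j:ℕ) - 2*s) := by
    intro j h; simp only [hbdef]; rw [if_neg h]
  -- membership of x, w, z in the span of b
  have hxmem : ∀ i : Fin s, x i ∈ Submodule.span (ZMod 2) (Set.range b) := by
    intro i
    have h2i : 2 * (i:ℕ) < v := by have := i.isLt; omega
    have hval : b ⟨2*(i:ℕ), h2i⟩ = x i := by
      rw [hb_even ⟨2*(i:ℕ), h2i⟩ (by show 2*(i:ℕ) < 2*s; have := i.isLt; omega)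
        (by show 2*(i:ℕ) % 2 = 0; omega)]
      simp only [hxx]
      have he : (2*(i:ℕ))/2 = (i:ℕ) := by omega
      rw [he, dif_pos i.isLt]
    rw [← hval]
    exact Submodule.subset_span ⟨_, rfl⟩
  have hwmem : ∀ i : Fin s, w i ∈ Submodule.span (ZMod 2) (Set.range b) := by
    intro i
    have h2i : 2 * (i:ℕ) + 1 < v := by have := i.isLt; omega
    have hval : b ⟨2*(i:ℕ)+1, h2i⟩ = x i + w i := by
      rw [hb_odd ⟨2*(i:ℕ)+1, h2i⟩ (by show 2*(i:ℕ)+1 < 2*s; have := i.isLt; omega)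
        (by show ¬(2*(i:ℕ)+1) % 2 = 0; omega)]
      simp only [hxx, hww]
      have he : (2*(i:ℕ)+1)/2 = (i:ℕ) := by omega
      rw [he, dif_pos i.isLt, dif_pos i.isLt]
    have hsum : w i = b ⟨2*(i:ℕ)+1, h2i⟩ + x i := by
      rw [hval]
      calc w i = w i + (x i + x i) := by rw [two_torsion, add_zero]
      _ = x i + w i + x i := by abel
    rw [hsum]
    exact add_mem (Submodule.subset_span ⟨_, rfl⟩) (hxmem i)
  have hzmem : ∀ jj : Fin (v - 2*s), z jj ∈ Submodule.span (ZMod 2) (Set.range b) := by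
    intro jj
    have hjv : 2*s + (jj:ℕ) < v := by have := jj.isLt; omega
    have hval : b ⟨2*s + (jj:ℕ), hjv⟩ = z jj := by
      rw [hb_z ⟨2*s + (jj:ℕ), hjv⟩ (by show ¬(2*s + (jj:ℕ) < 2*s); omega)]
      simp only [hzz]
      have he : (2*s + (jj:ℕ)) - 2*s = (jj:ℕ) := by omega
      rw [he, dif_pos jj.isLt]
    rw [← hval]
    exact Submodule.subset_span ⟨_, rfl⟩
  -- b spans
  have hspan : ⊤ ≤ Submodule.span (ZMod 2) (Set.range b) := by
    intro y _
    have hrangew : Set.range w = ⇑g '' Set.range x := by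
      have hwx : w = ⇑g ∘ x := funext fun i => (hx i).symm
      rw [hwx, Set.range_comp]
    have hWmap : Submodule.map g (Submodule.span (ZMod 2) (Set.range x)) = W := by
      rw [Submodule.map_span, ← hrangew, hw_span]
    have hgy : g y ∈ Submodule.map g (Submodule.span (ZMod 2) (Set.range x)) := by
      rw [hWmap]; exact ⟨y, rfl⟩
    obtain ⟨u, hu, hgu⟩ := hgy
    have hyu : y + u ∈ K := by
      apply LinearMap.mem_ker.mpr
      rw [map_add, hgu]
      exact two_torsion _
    have hyrep : y = u + (y + u) := by
      calc y = (u + u) + y := by rw [two_torsion, zero_add]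
      _ = u + (y + u) := by abel
    rw [hyrep]
    apply add_mem
    · exact Submodule.span_le.mpr (Set.range_subset_iff.mpr hxmem) hu
    · exact (sup_le (Submodule.span_le.mpr (Set.range_subset_iff.mpr hwmem))
        (Submodule.span_le.mpr (Set.range_subset_iff.mpr hzmem))) (hKspan (y+u) hyu)
  have hcard : Fintype.card (Fin v) = Module.finrank (ZMod 2) (BinVec v) := by
    simp [Module.finrank_pi]
  set bV := basisOfTopLeSpanOfCardEqFinrank b hspan hcard with hbV
  have hbVeq : ∀ j, bV j = b j := fun j =>
    congrFun (coe_basisOfTopLeSpanOfCardEqFinrank b hspan hcard) j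
  -- the swap property
  have hMz : ∀ n : ℕ, M *ᵥ zz n = zz n := by
    intro n
    simp only [hzz]
    split_ifs with h
    · exact hMfix _ (hzK _)
    · exact Matrix.mulVec_zero M
  have hMww : ∀ n : ℕ, M *ᵥ ww n = ww n := by
    intro n
    simp only [hww]
    split_ifs with h
    · exact hMfix _ (hWK (hwW _))
    · exact Matrix.mulVec_zero M
  have hMxx : ∀ n : ℕ, n < s → M *ᵥ xx n = xx n + ww n := by
    intro n h
    simp only [hxx, hww]
    rw [dif_pos h, dif_pos h]
    exact hMx _
  have hswap : ∀ j : Fin v, M *ᵥ b j = b ⟨pairSwap s (j:ℕ), pairSwap_lt h2s j.isLt⟩ := by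
    intro j
    by_cases h : (j:ℕ) < 2*s
    · have hd2 : (j:ℕ)/2 < s := by omega
      by_cases hp : (j:ℕ) % 2 = 0
      · have hps : pairSwap s (j:ℕ) = (j:ℕ)+1 := by
          unfold pairSwap; rw [if_pos h, if_pos hp]
        rw [hb_even j h hp, hMxx _ hd2]
        have h1 : ((⟨pairSwap s (j:ℕ), pairSwap_lt h2s j.isLt⟩ : Fin v) : ℕ) = (j:ℕ)+1 := hps
        rw [hb_odd _ (by rw [h1]; omega) (by rw [h1]; omega), h1]
        have he : ((j:ℕ)+1)/2 = (j:ℕ)/2 := by omega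
        rw [he]
      · have hps : pairSwap s (j:ℕ) = (j:ℕ)-1 := by
          unfold pairSwap; rw [if_pos h, if_neg hp]
        rw [hb_odd j h hp, Matrix.mulVec_add, hMxx _ hd2, hMww]
        have h1 : ((⟨pairSwap s (j:ℕ), pairSwap_lt h2s j.isLt⟩ : Fin v) : ℕ) = (j:ℕ)-1 := hps
        rw [hb_even _ (by rw [h1]; omega) (by rw [h1]; omega), h1]
        have he : ((j:ℕ)-1)/2 = (j:ℕ)/2 := by omega
        rw [he]
        calc xx ((j:ℕ)/2) + ww ((j:ℕ)/2) + ww ((j:ℕ)/2)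
            = xx ((j:ℕ)/2) + (ww ((j:ℕ)/2) + ww ((j:ℕ)/2)) := by abel
        _ = xx ((j:ℕ)/2) := by rw [two_torsion, add_zero]
    · have hps : pairSwap s (j:ℕ) = (j:ℕ) := by
        unfold pairSwap; rw [if_neg h]
      rw [hb_z j h, hMz]
      have h1 : ((⟨pairSwap s (j:ℕ), pairSwap_lt h2s j.isLt⟩ : Fin v) : ℕ) = (j:ℕ) := hps
      rw [hb_z _ (by rw [h1]; omega), h1]
  -- build the conjugating matrix from the basis
  set e : BinVec v ≃ₗ[ZMod 2] BinVec v :=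
    (Pi.basisFun (ZMod 2) (Fin v)).equiv bV (Equiv.refl _) with hedef
  have he : ∀ j, e (Pi.single j 1) = b j := by
    intro j
    have h := Basis.equiv_apply (Pi.basisFun (ZMod 2) (Fin v)) j bV (Equiv.refl _)
    rw [Pi.basisFun_apply] at h
    rw [hedef, h, Equiv.refl_apply, hbVeq]
  set P : Matrix (Fin v) (Fin v) (ZMod 2) :=
    LinearMap.toMatrix' (e : BinVec v →ₗ[ZMod 2] BinVec v) with hP
  set Q : Matrix (Fin v) (Fin v) (ZMod 2) :=
    LinearMap.toMatrix' (e.symm : BinVec v →ₗ[ZMod 2] BinVec v) with hQ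
  have hPQ : P * Q = 1 := by
    rw [hP, hQ, ← LinearMap.toMatrix'_comp]
    have : (e : BinVec v →ₗ[ZMod 2] BinVec v) ∘ₗ (e.symm : BinVec v →ₗ[ZMod 2] BinVec v)
        = LinearMap.id := by ext y; simp
    rw [this, LinearMap.toMatrix'_id]
  have hQP : Q * P = 1 := by
    rw [hP, hQ, ← LinearMap.toMatrix'_comp]
    have : (e.symm : BinVec v →ₗ[ZMod 2] BinVec v) ∘ₗ (e : BinVec v →ₗ[ZMod 2] BinVec v)
        = LinearMap.id := by ext y; simp
    rw [this, LinearMap.toMatrix'_id]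
  refine ⟨⟨P, Q, hPQ, hQP⟩, ?_⟩
  have hAvs_single : ∀ j : Fin v, (Avs v s) *ᵥ Pi.single j 1
      = Pi.single (⟨pairSwap s (j:ℕ), pairSwap_lt h2s j.isLt⟩ : Fin v) 1 := by
    intro j
    funext i
    rw [Matrix.mulVec_single]
    simp only [Avs, Matrix.of_apply, mul_one, Pi.smul_apply, Matrix.col_apply, op_smul_eq_mul]
    by_cases hij : (j:ℕ) = pairSwap s (i:ℕ)
    · rw [if_pos hij]
      have : i = (⟨pairSwap s (j:ℕ), pairSwap_lt h2s j.isLt⟩ : Fin v) := by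
        apply Fin.ext
        show (i:ℕ) = pairSwap s (j:ℕ)
        rw [hij, pairSwap_invol]
      rw [this, Pi.single_eq_same]
    · rw [if_neg hij]
      have : i ≠ (⟨pairSwap s (j:ℕ), pairSwap_lt h2s j.isLt⟩ : Fin v) := by
        intro hcon
        apply hij
        have : (i:ℕ) = pairSwap s (j:ℕ) := congrArg Fin.val hcon
        rw [this, pairSwap_invol]
      rw [Pi.single_eq_of_ne this]
  have hMP : M * P = P * Avs v s := by
    apply Matrix.toLin'.injective
    rw [Matrix.toLin'_mul, Matrix.toLin'_mul]
    apply (Pi.basisFun (ZMod 2) (Fin v)).ext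
    intro j
    rw [Pi.basisFun_apply]
    have htP : Matrix.toLin' P = (e : BinVec v →ₗ[ZMod 2] BinVec v) := by
      rw [hP]; exact Matrix.toLin'_toMatrix' _
    simp only [LinearMap.coe_comp, Function.comp_apply]
    rw [htP]
    show Matrix.toLin' M (e (Pi.single j 1)) = e (Matrix.toLin' (Avs v s) (Pi.single j 1))
    rw [he j, Matrix.toLin'_apply, Matrix.toLin'_apply, hswap j, hAvs_single j, he]
  show M = P * Avs v s * Q
  calc M = M * (P * Q) := by rw [hPQ, mul_one]
  _ = (M * P) * Q := by rw [mul_assoc]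
  _ = P * Avs v s * Q := by rw [hMP]

end Conj


end QSteiner

/-- automorphisms of order 2 of an `S_2[2,3,v]` with `v ≡ 3 (mod 6)`. -/
theorem stmt2 (v : ℕ) (hv7 : 7 ≤ v) (hv : v % 6 = 3)
    (D : Set (Submodule (ZMod 2) (BinVec v))) (hD : IsSteinerTriple v D)
    (A : GL (Fin v) (ZMod 2)) (hAut : IsAutM v A.val D)
    (hA2 : A ^ 2 = 1) (hA1 : A ≠ 1) :
    ∃ s : ℕ, 1 ≤ s ∧ s ≤ v / 2 ∧ s % 3 ≠ 2 ∧ ConjGL v A.val (Avs v s) := by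
  classical
  set M := A.val with hM
  have hM2 : M * M = 1 := by
    have h := congrArg Units.val hA2
    rw [pow_two] at h
    exact h
  have hMne : M ≠ 1 := fun h => hA1 (Units.ext h)
  set G : BinVec v →ₗ[ZMod 2] BinVec v := M.vecMulLinear - LinearMap.id with hG
  have hFixG : QSteiner.Fix M = LinearMap.ker G := rfl
  set s := Module.finrank (ZMod 2) (LinearMap.range G) with hsdef
  set f := Module.finrank (ZMod 2) (QSteiner.Fix M) with hfdef
  have hrn : s + f = v := by
    have := LinearMap.finrank_range_add_finrank_ker G
    rwa [Module.finrank_pi, Fintype.card_fin, ← hFixG] at this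
  have hGinv : ∀ x : BinVec v, Matrix.vecMul (Matrix.vecMul x M) M = x := QSteiner.vecMul_invol hM2
  have hGx : ∀ x : BinVec v, G x = Matrix.vecMul x M + x := by
    intro x
    simp only [hG, LinearMap.sub_apply, Matrix.vecMulLinear_apply, LinearMap.id_apply]
    exact QSteiner.sub_eq_add' _ _
  have hGG : ∀ x : BinVec v, G (G x) = 0 := by
    intro x
    rw [hGx, hGx, Matrix.add_vecMul, hGinv]
    calc x + Matrix.vecMul x M + (Matrix.vecMul x M + x) = (x + x) + (Matrix.vecMul x M + Matrix.vecMul x M) := by abel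
    _ = 0 := by rw [QSteiner.two_torsion, QSteiner.two_torsion, add_zero]
  have hWK : LinearMap.range G ≤ LinearMap.ker G := by
    rintro y ⟨u, rfl⟩
    exact LinearMap.mem_ker.mpr (hGG u)
  have hsf : s ≤ f := by
    rw [hsdef, hfdef, hFixG]
    exact Submodule.finrank_mono hWK
  have hvecinj : Function.Injective
      (Matrix.vecMulLinear : Matrix (Fin v) (Fin v) (ZMod 2) → _) := by
    intro A B h
    have hA' : LinearMap.toMatrixRight' (Matrix.vecMulLinear A) = A :=
      LinearMap.toMatrixRight'.apply_symm_apply A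
    have hB' : LinearMap.toMatrixRight' (Matrix.vecMulLinear B) = B :=
      LinearMap.toMatrixRight'.apply_symm_apply B
    rw [← hA', ← hB', h]
  have hs1 : 1 ≤ s := by
    by_contra h
    push_neg at h
    have h0 : s = 0 := by omega
    have hbot : LinearMap.range G = ⊥ := Submodule.finrank_eq_zero.mp h0
    have hG0 : G = 0 := LinearMap.range_eq_bot.mp hbot
    apply hMne
    apply hvecinj
    have : M.vecMulLinear = LinearMap.id := by
      have := sub_eq_zero.mp (hG ▸ hG0 : M.vecMulLinear - LinearMap.id = 0)
      exact this
    rw [this]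
    apply LinearMap.ext
    intro y
    simp [Matrix.vecMulLinear_apply, Matrix.vecMul_one]
  refine ⟨s, hs1, by omega, ?_, ?_⟩
  · -- s % 3 ≠ 2
    intro hs2
    have hv3 : v % 3 = 0 := by omega
    have hf1 : 1 ≤ f := by omega
    have hfmod : f % 3 = 1 := by omega
    exact QSteiner.mod7_contradiction hD hAut hM2 hf1 hfmod hv3
  · -- conjugacy
    have hsrank : Module.finrank (ZMod 2) (LinearMap.range (M.mulVecLin - LinearMap.id)) = s := by
      set N := M - 1 with hN
      have key1 : N.mulVecLin = M.mulVecLin - LinearMap.id := by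
        apply LinearMap.ext
        intro y
        simp only [Matrix.mulVecLin_apply, LinearMap.sub_apply, LinearMap.id_apply, hN,
          Matrix.sub_mulVec, Matrix.one_mulVec]
      have key2 : N.vecMulLinear = G := by
        apply LinearMap.ext
        intro y
        simp only [Matrix.vecMulLinear_apply, hG, LinearMap.sub_apply, LinearMap.id_apply,
          Matrix.vecMulLinear_apply, hN, Matrix.vecMul_sub, Matrix.vecMul_one]
      have key3 : N.transpose.mulVecLin = N.vecMulLinear := Matrix.mulVecLin_transpose N
      have h1 : Module.finrank (ZMod 2) (LinearMap.range (M.mulVecLin - LinearMap.id)) = N.rank := by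
        rw [Matrix.rank, key1]
      have h2 : N.transpose.rank = s := by
        rw [Matrix.rank, key3, key2, hsdef]
      rw [h1, ← Matrix.rank_transpose, h2]
    exact QSteiner.conj_Avs v s M hM2 hsrank (by omega)
end

section
/- Let D be a binary q-analog of the Fano plane and let A in GL(7, F_2) be an automorphism of D with A² = 1 and A ≠ 1. Then A is conjugate in GL(7, F_2) to the matrix A_{7,3}, i.e., the 7×7 block diagonal matrix with three consecutive 2×2 blocks [[0,1],[1,0]] followed by a 1×1 identity block. -/
namespace Stmt8A
open Module Submodule LinearMap

variable {M : Matrix (Fin 7) (Fin 7) (ZMod 2)}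

lemma matrix_add_self (X : Matrix (Fin 7) (Fin 7) (ZMod 2)) : X + X = 0 := by
  ext i j
  simp [Matrix.add_apply]
  exact CharTwo.add_self_eq_zero _

lemma sq_zero (hM2 : M * M = 1) : (M + 1) * (M + 1) = 0 := by
  have h : (M + 1) * (M + 1) = M * M + (M + M) + 1 := by noncomm_ring
  rw [h, hM2, matrix_add_self, add_zero, matrix_add_self]

lemma vecMul_add_one (x : BinVec 7) :
    (Matrix.vecMulLinear (M + 1)) x = (Matrix.vecMulLinear M) x + x := by
  simp [Matrix.vecMulLinear_apply, Matrix.vecMul_add]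

lemma nsq (hM2 : M * M = 1) (x : BinVec 7) :
    (Matrix.vecMulLinear (M + 1)) ((Matrix.vecMulLinear (M + 1)) x) = 0 := by
  rw [Matrix.vecMulLinear_apply, Matrix.vecMulLinear_apply, Matrix.vecMul_vecMul, sq_zero hM2]
  simp

-- membership in F iff fixed
lemma mem_ker_iff (x : BinVec 7) :
    x ∈ ker (Matrix.vecMulLinear (M + 1)) ↔ (Matrix.vecMulLinear M) x = x := by
  rw [LinearMap.mem_ker, vecMul_add_one]
  constructor
  · intro h
    have := congrArg (· + x) h
    simpa [add_assoc, CharTwo.add_self_eq_zero] using this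
  · intro h; rw [h]; exact CharTwo.add_self_eq_zero _

end Stmt8A

namespace Stmt8B
open Module Submodule LinearMap Stmt8A

variable {M : Matrix (Fin 7) (Fin 7) (ZMod 2)}

-- char-two helper
lemma add_eq_zero_iff {α : Type*} [AddCommGroup α] [Module (ZMod 2) α] (a b : α) :
    a + b = 0 ↔ a = b := by
  constructor
  · intro h
    have h2 : a + (b + b) = (a + b) + b := by abel
    have hbb : b + b = 0 := by
      have := CharTwo.add_self_eq_zero (R := ZMod 2) 1
      calc b + b = (1 : ZMod 2) • b + (1 : ZMod 2) • b := by simp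
        _ = ((1 : ZMod 2) + 1) • b := by rw [add_smul]
        _ = 0 := by rw [this]; simp
    rw [hbb, add_zero, h, zero_add] at h2
    exact h2
  · rintro rfl
    have : a + a = ((1 : ZMod 2) + 1) • a := by rw [add_smul]; simp
    have h11 : (1 + 1 : ZMod 2) = 0 := rfl
    rw [this, h11, zero_smul]

-- pair span rank over ZMod 2
lemma pair_rank {x y : BinVec 7} (hx : x ≠ 0) (hy : y ≠ 0) (hxy : x ≠ y) :
    finrank (ZMod 2) (span (ZMod 2) {x, y}) = 2 := by
  have hli : LinearIndependent (ZMod 2) ![x, y] := by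
    rw [LinearIndependent.pair_iff]
    intro s t hst
    have hc : ∀ c : ZMod 2, c = 0 ∨ c = 1 := by decide
    rcases hc s with rfl | rfl <;> rcases hc t with rfl | rfl
    · exact ⟨rfl, rfl⟩
    · exact absurd (by simpa using hst) hy
    · exact absurd (by simpa using hst) hx
    · exact absurd ((add_eq_zero_iff x y).1 (by simpa using hst)) hxy
  have h2 := finrank_span_eq_card hli
  have hr : Set.range ![x, y] = {x, y} := by
    simp [Matrix.range_cons, Matrix.range_empty, Set.pair_comm]
  rw [hr] at h2
  simpa using h2

section Blocks
variable {M : Matrix (Fin 7) (Fin 7) (ZMod 2)}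

local notation "g" => Matrix.vecMulLinear M
local notation "n" => Matrix.vecMulLinear (M + 1)
local notation "F" => LinearMap.ker (Matrix.vecMulLinear (M + 1))

lemma mem_of_fixed {B : Submodule (ZMod 2) (BinVec 7)} (hB : subApply 7 M B = B)
    {x : BinVec 7} (hx : x ∈ B) : g x ∈ B := by
  have : g x ∈ subApply 7 M B := Submodule.mem_map_of_mem hx
  rwa [hB] at this

lemma nmem_of_fixed {B : Submodule (ZMod 2) (BinVec 7)} (hB : subApply 7 M B = B)
    {x : BinVec 7} (hx : x ∈ B) : n x ∈ B := by
  rw [vecMul_add_one]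
  exact B.add_mem (mem_of_fixed hB hx) hx

lemma fix_block_finrank (hM2 : M * M = 1) {B : Submodule (ZMod 2) (BinVec 7)}
    (hB3 : finrank (ZMod 2) B = 3) (hBfix : subApply 7 M B = B) :
    2 ≤ finrank (ZMod 2) ((B ⊓ F : Submodule (ZMod 2) (BinVec 7))) := by
  have hmaps : ∀ x ∈ B, n x ∈ B := fun x hx => nmem_of_fixed hBfix hx
  set n' := (Matrix.vecMulLinear (M + 1)).restrict hmaps with hn'
  have hrange_le : LinearMap.range n' ≤ LinearMap.ker n' := by
    rintro y ⟨x, rfl⟩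
    rw [LinearMap.mem_ker]
    apply Subtype.ext
    have h1 : (n' x : BinVec 7) = n (x : BinVec 7) := rfl
    have h2 : (n' (n' x) : BinVec 7) = n ((n' x : BinVec 7)) := rfl
    rw [h2, h1, nsq hM2]
    rfl
  have hfr := LinearMap.finrank_range_add_finrank_ker n'
  have hle : finrank (ZMod 2) (LinearMap.range n') ≤ finrank (ZMod 2) (LinearMap.ker n') :=
    Submodule.finrank_mono hrange_le
  rw [hB3] at hfr
  have hker : 2 ≤ finrank (ZMod 2) (LinearMap.ker n') := by omega
  have hkeq : Submodule.map B.subtype (LinearMap.ker n') = B ⊓ F := by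
    rw [hn', LinearMap.ker_restrict, Submodule.map_comap_subtype]
  calc 2 ≤ finrank (ZMod 2) (LinearMap.ker n') := hker
    _ = finrank (ZMod 2) (Submodule.map B.subtype (LinearMap.ker n')) :=
        (Submodule.finrank_map_subtype_eq B _).symm
    _ = finrank (ZMod 2) ((B ⊓ F : Submodule (ZMod 2) (BinVec 7))) := by rw [hkeq]

end Blocks

open scoped Classical

lemma card_filter_mem (S : Submodule (ZMod 2) (BinVec 7)) :
    (Finset.univ.filter (fun x : BinVec 7 => x ∈ S)).card = 2 ^ finrank (ZMod 2) S := by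
  rw [← Fintype.card_subtype]
  have h := card_eq_pow_finrank (K := ZMod 2) (V := S)
  have hq : Fintype.card (ZMod 2) = 2 := by decide
  rw [hq] at h
  rw [← h]


section Counting
variable {M : Matrix (Fin 7) (Fin 7) (ZMod 2)} {D : Set (Submodule (ZMod 2) (BinVec 7))}

local notation "K2" => ZMod 2
local notation "V7" => BinVec 7
local notation "g" => Matrix.vecMulLinear M
local notation "nn" => Matrix.vecMulLinear (M + 1)
local notation "F" => LinearMap.ker (Matrix.vecMulLinear (M + 1))

set_option maxHeartbeats 2000000 in
lemma not_f_ge_5 (hD : IsSteinerTriple 7 D) (hAut : subApply 7 M '' D = D)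
    (hM2 : M * M = 1) (hf5 : 5 ≤ finrank K2 F) (hf6 : finrank K2 F ≤ 6) : False := by
  classical
  obtain ⟨hb3, hex2⟩ := hD
  -- the block of a 2-dim subspace
  have hex : ∀ T : Submodule K2 V7, finrank K2 T = 2 → ∃ B, B ∈ D ∧ T ≤ B :=
    fun T hT => (hex2 T hT).exists
  set blk : Submodule K2 V7 → Submodule K2 V7 :=
    fun T => if h : ∃ B, B ∈ D ∧ T ≤ B then h.choose else ⊥ with hblk
  have hblk_spec : ∀ T : Submodule K2 V7, finrank K2 T = 2 → blk T ∈ D ∧ T ≤ blk T := by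
    intro T hT
    rw [hblk]
    simp only [dif_pos (hex T hT)]
    exact (hex T hT).choose_spec
  have hblk_uniq : ∀ T : Submodule K2 V7, finrank K2 T = 2 → ∀ B, B ∈ D → T ≤ B → B = blk T := by
    intro T hT B hB hTB
    obtain ⟨B', hB', huniq⟩ := hex2 T hT
    rw [huniq B ⟨hB, hTB⟩, ← huniq (blk T) ⟨(hblk_spec T hT).1, (hblk_spec T hT).2⟩]
  have hmemD_img : ∀ B ∈ D, subApply 7 M B ∈ D := fun B hB => by
    rw [← hAut]; exact Set.mem_image_of_mem _ hB
  have hblk_fix : ∀ T : Submodule K2 V7, finrank K2 T = 2 → subApply 7 M T = T →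
      subApply 7 M (blk T) = blk T := by
    intro T hT hTfix
    have hle : T ≤ subApply 7 M (blk T) := by
      conv_lhs => rw [← hTfix]
      exact Submodule.map_mono (hblk_spec T hT).2
    exact (hblk_uniq T hT _ (hmemD_img _ (hblk_spec T hT).1) hle)
  -- facts about the fixed space
  have hgfix : ∀ x ∈ F, g x = x := fun x hx => (mem_ker_iff x).1 hx
  have hgfix' : ∀ x : V7, g x = x → x ∈ F := fun x hx => (mem_ker_iff x).2 hx
  have hginv : ∀ x : V7, g (g x) = x := by
    intro x
    simp only [Matrix.vecMulLinear_apply, Matrix.vecMul_vecMul, hM2, Matrix.vecMul_one]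
  have hgzero : g 0 = 0 := map_zero _
  have hspan_fix : ∀ x : V7, subApply 7 M (Submodule.span K2 {x, g x})
      = Submodule.span K2 {x, g x} := by
    intro x
    rw [subApply, Submodule.map_span]
    congr 1
    rw [Set.image_pair, hginv, Set.pair_comm]
  have hspan_rank : ∀ x : V7, x ∉ F → finrank K2 (Submodule.span K2 {x, g x}) = 2 := by
    intro x hx
    have hx0 : x ≠ 0 := fun h => hx (h ▸ Submodule.zero_mem F)
    have hgx0 : g x ≠ 0 := by
      intro h
      have := hginv x
      rw [h, hgzero] at this
      exact hx0 this.symm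
    have hxgx : x ≠ g x := fun h => hx (hgfix' x h.symm)
    exact pair_rank hx0 hgx0 hxgx
  -- finrank of intersections for fixed blocks
  have hBF2 : ∀ B ∈ D, subApply 7 M B = B → ¬ B ≤ F →
      finrank K2 ((B ⊓ F : Submodule K2 V7)) = 2 := by
    intro B hBD hBfix hBnle
    have hge := fix_block_finrank hM2 (hb3 B hBD) hBfix
    have hle3 : finrank K2 ((B ⊓ F : Submodule K2 V7)) ≤ 3 := by
      have h := Submodule.finrank_mono (inf_le_left : B ⊓ F ≤ B)
      rw [hb3 B hBD] at h
      exact h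
    have hne3 : finrank K2 ((B ⊓ F : Submodule K2 V7)) ≠ 3 := by
      intro h3
      have heq : (B ⊓ F : Submodule K2 V7) = B :=
        eq_of_le_of_finrank_eq inf_le_left (by rw [h3, hb3 B hBD])
      exact hBnle (inf_eq_left.mp heq)
    omega
  -- Count 1 : points outside F vs b-type blocks
  set Out : Finset V7 := Finset.univ.filter (fun x => x ∉ F) with hOut
  set Dfin : Finset (Submodule K2 V7) :=
    Finset.univ.filter (fun B => B ∈ D ∧ subApply 7 M B = B) with hDfin
  set Db : Finset (Submodule K2 V7) := Dfin.filter (fun B => ¬ B ≤ F) with hDb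
  set Da : Finset (Submodule K2 V7) := Dfin.filter (fun B => B ≤ F) with hDa
  set φ : V7 → Submodule K2 V7 := fun x => blk (Submodule.span K2 {x, g x}) with hφ
  have hxspan : ∀ x : V7, x ∈ Submodule.span K2 {x, g x} :=
    fun x => Submodule.subset_span (Set.mem_insert _ _)
  have hgxspan : ∀ x : V7, g x ∈ Submodule.span K2 {x, g x} :=
    fun x => Submodule.subset_span (Set.mem_insert_of_mem _ rfl)
  have hmap1 : ∀ x ∈ Out, φ x ∈ Db := by
    intro x hx
    rw [hOut, Finset.mem_filter] at hx
    have hxF : x ∉ F := hx.2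
    have hrk := hspan_rank x hxF
    rw [hDb, hDfin, Finset.mem_filter, Finset.mem_filter]
    refine ⟨⟨Finset.mem_univ _, (hblk_spec _ hrk).1, hblk_fix _ hrk (hspan_fix x)⟩, ?_⟩
    intro hle
    exact hxF (hle ((hblk_spec _ hrk).2 (hxspan x)))
  have hcard1 := Finset.card_eq_sum_card_fiberwise hmap1
  have hfib1 : ∀ B ∈ Db, (Out.filter (fun x => φ x = B)).card = 4 := by
    intro B hB
    rw [hDb, Finset.mem_filter, hDfin, Finset.mem_filter] at hB
    obtain ⟨⟨-, hBD, hBfix⟩, hBnle⟩ := hB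
    have hset : Out.filter (fun x => φ x = B)
        = Finset.univ.filter (fun x => x ∈ B ∧ x ∉ F) := by
      ext x
      rw [Finset.mem_filter, hOut, Finset.mem_filter, Finset.mem_filter]
      constructor
      · rintro ⟨⟨-, hxF⟩, hφx⟩
        have hrk := hspan_rank x hxF
        exact ⟨Finset.mem_univ _, hφx ▸ (hblk_spec _ hrk).2 (hxspan x), hxF⟩
      · rintro ⟨-, hxB, hxF⟩
        have hrk := hspan_rank x hxF
        have hle : Submodule.span K2 {x, g x} ≤ B := by
          rw [Submodule.span_le]
          rintro y (rfl | rfl)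
          · exact hxB
          · exact mem_of_fixed hBfix hxB
        exact ⟨⟨Finset.mem_univ _, hxF⟩, (hblk_uniq _ hrk B hBD hle).symm⟩
    rw [hset]
    have hsplit := Finset.card_filter_add_card_filter_not
      (s := Finset.univ.filter (fun x : V7 => x ∈ B)) (p := fun x => x ∈ F)
    rw [Finset.filter_filter, Finset.filter_filter] at hsplit
    have hcB : (Finset.univ.filter (fun x : V7 => x ∈ B)).card = 8 := by
      rw [card_filter_mem, hb3 B hBD]
      norm_num
    have hcBF : (Finset.univ.filter (fun x : V7 => x ∈ B ∧ x ∈ F)).card = 4 := by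
      have hpred : Finset.univ.filter (fun x : V7 => x ∈ B ∧ x ∈ F)
          = Finset.univ.filter (fun x => x ∈ (B ⊓ F : Submodule K2 V7)) := by
        apply Finset.filter_congr
        intro x _
        simp [Submodule.mem_inf]
      rw [hpred, card_filter_mem, hBF2 B hBD hBfix hBnle]
      norm_num
    have : (Finset.univ.filter (fun x : V7 => x ∈ B ∧ x ∉ F)).card
        = (Finset.univ.filter (fun x : V7 => x ∈ B ∧ ¬ x ∈ F)).card := rfl
    omega
  have heq1 : Out.card = 4 * Db.card := by
    rw [hcard1, Finset.sum_congr rfl hfib1, Finset.sum_const, smul_eq_mul, mul_comm]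
  have hcardV : (Finset.univ : Finset V7).card = 128 := by
    rw [Finset.card_univ]
    rw [show Fintype.card V7 = 128 by simp [Fintype.card_fun]]
  have hpow : (Finset.univ.filter (fun x : V7 => x ∈ F)).card ≤ 128 := by
    rw [← hcardV]
    exact Finset.card_filter_le _ _
  have hOutCard : Out.card + (Finset.univ.filter (fun x : V7 => x ∈ F)).card = 128 := by
    have h0 : Out = Finset.univ \ Finset.univ.filter (fun x : V7 => x ∈ F) := by
      ext x
      simp [hOut]
    rw [h0, Finset.card_sdiff_of_subset (Finset.filter_subset _ _), hcardV]
    omega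
  -- Count 2 : pairs of independent fixed vectors vs fixed blocks
  set Pairs := ((Finset.univ.filter (fun x : V7 => x ∈ F)).erase 0).offDiag with hPairs
  set ψ : V7 × V7 → Submodule K2 V7 := fun p => blk (Submodule.span K2 {p.1, p.2}) with hψ
  have hmemP : ∀ p : V7 × V7, p ∈ Pairs ↔
      (p.1 ∈ F ∧ p.1 ≠ 0 ∧ p.2 ∈ F ∧ p.2 ≠ 0 ∧ p.1 ≠ p.2) := by
    intro p
    rw [hPairs, Finset.mem_offDiag, Finset.mem_erase, Finset.mem_erase,
      Finset.mem_filter, Finset.mem_filter]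
    constructor
    · rintro ⟨⟨h10, -, h1F⟩, ⟨h20, -, h2F⟩, hne⟩
      exact ⟨h1F, h10, h2F, h20, hne⟩
    · rintro ⟨h1F, h10, h2F, h20, hne⟩
      exact ⟨⟨h10, Finset.mem_univ _, h1F⟩, ⟨h20, Finset.mem_univ _, h2F⟩, hne⟩
  have hprank : ∀ p : V7 × V7, p ∈ Pairs → finrank K2 (Submodule.span K2 {p.1, p.2}) = 2 := by
    intro p hp
    rw [hmemP] at hp
    exact pair_rank hp.2.1 hp.2.2.2.1 hp.2.2.2.2
  have hpfix : ∀ p : V7 × V7, p.1 ∈ F → p.2 ∈ F →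
      subApply 7 M (Submodule.span K2 {p.1, p.2}) = Submodule.span K2 {p.1, p.2} := by
    intro p h1 h2
    rw [subApply, Submodule.map_span]
    congr 1
    rw [Set.image_pair, hgfix _ h1, hgfix _ h2]
  have hmap2 : ∀ p ∈ Pairs, ψ p ∈ Dfin := by
    intro p hp
    have hrk := hprank p hp
    rw [hmemP] at hp
    rw [hDfin, Finset.mem_filter]
    exact ⟨Finset.mem_univ _, (hblk_spec _ hrk).1,
      hblk_fix _ hrk (hpfix p hp.1 hp.2.2.1)⟩
  have hcard2 := Finset.card_eq_sum_card_fiberwise hmap2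
  have hfibgen : ∀ B, B ∈ D → subApply 7 M B = B → Pairs.filter (fun p => ψ p = B)
      = ((Finset.univ.filter (fun x : V7 => x ∈ (B ⊓ F : Submodule K2 V7))).erase 0).offDiag := by
    intro B hBD hBfix
    ext p
    rw [Finset.mem_filter]
    constructor
    · rintro ⟨hp, hψp⟩
      have hrk := hprank p hp
      have hle : Submodule.span K2 {p.1, p.2} ≤ B := hψp ▸ (hblk_spec _ hrk).2
      rw [hmemP] at hp
      obtain ⟨h1F, h10, h2F, h20, hne⟩ := hp
      refine Finset.mem_offDiag.2 ⟨Finset.mem_erase.2 ⟨h10, Finset.mem_filter.2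
        ⟨Finset.mem_univ _, ?_⟩⟩, Finset.mem_erase.2 ⟨h20, Finset.mem_filter.2
        ⟨Finset.mem_univ _, ?_⟩⟩, hne⟩
      · exact Submodule.mem_inf.2 ⟨hle (Submodule.subset_span (Set.mem_insert _ _)), h1F⟩
      · exact Submodule.mem_inf.2
          ⟨hle (Submodule.subset_span (Set.mem_insert_of_mem _ rfl)), h2F⟩
    · intro hmem
      obtain ⟨hm1, hm2, hne⟩ := Finset.mem_offDiag.1 hmem
      obtain ⟨h10, hm1'⟩ := Finset.mem_erase.1 hm1
      obtain ⟨h20, hm2'⟩ := Finset.mem_erase.1 hm2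
      have h1BF := Submodule.mem_inf.1 (Finset.mem_filter.1 hm1').2
      have h2BF := Submodule.mem_inf.1 (Finset.mem_filter.1 hm2').2
      have hp : p ∈ Pairs := (hmemP p).2 ⟨h1BF.2, h10, h2BF.2, h20, hne⟩
      have hrk := hprank p hp
      have hle : Submodule.span K2 {p.1, p.2} ≤ B := by
        rw [Submodule.span_le]
        rintro y (rfl | rfl)
        · exact h1BF.1
        · exact h2BF.1
      exact ⟨hp, (hblk_uniq _ hrk B hBD hle).symm⟩
  have hfibcard : ∀ B, B ∈ D → subApply 7 M B = B →
      (Pairs.filter (fun p => ψ p = B)).card =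
      (2 ^ finrank K2 ((B ⊓ F : Submodule K2 V7)) - 1) * (2 ^ finrank K2 ((B ⊓ F : Submodule K2 V7)) - 1)
        - (2 ^ finrank K2 ((B ⊓ F : Submodule K2 V7)) - 1) := by
    intro B hBD hBfix
    rw [hfibgen B hBD hBfix, Finset.offDiag_card, Finset.card_erase_of_mem, card_filter_mem]
    rw [Finset.mem_filter]
    exact ⟨Finset.mem_univ _, Submodule.zero_mem _⟩
  have hfib2a : ∀ B ∈ Da, (Pairs.filter (fun p => ψ p = B)).card = 42 := by
    intro B hB
    rw [hDa, Finset.mem_filter, hDfin, Finset.mem_filter] at hB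
    obtain ⟨⟨-, hBD, hBfix⟩, hBle⟩ := hB
    rw [hfibcard B hBD hBfix, inf_eq_left.mpr hBle, hb3 B hBD]
    norm_num
  have hfib2b : ∀ B ∈ Db, (Pairs.filter (fun p => ψ p = B)).card = 6 := by
    intro B hB
    rw [hDb, Finset.mem_filter, hDfin, Finset.mem_filter] at hB
    obtain ⟨⟨-, hBD, hBfix⟩, hBnle⟩ := hB
    rw [hfibcard B hBD hBfix, hBF2 B hBD hBfix hBnle]
    norm_num
  have hsa : ∑ B ∈ Da, (Pairs.filter (fun p => ψ p = B)).card = 42 * Da.card := by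
    rw [Finset.sum_congr rfl hfib2a, Finset.sum_const, smul_eq_mul, mul_comm]
  have hsb : ∑ B ∈ Db, (Pairs.filter (fun p => ψ p = B)).card = 6 * Db.card := by
    rw [Finset.sum_congr rfl hfib2b, Finset.sum_const, smul_eq_mul, mul_comm]
  have hdisj : Disjoint Da Db := by
    rw [Finset.disjoint_left]
    intro B hBa hBb
    rw [hDa, Finset.mem_filter] at hBa
    rw [hDb, Finset.mem_filter] at hBb
    exact hBb.2 hBa.2
  have hunion : Da ∪ Db = Dfin := by
    ext B
    simp only [hDa, hDb, Finset.mem_union, Finset.mem_filter]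
    constructor
    · rintro (h | h) <;> exact h.1
    · intro h
      by_cases hle : B ≤ (LinearMap.ker (Matrix.vecMulLinear (M + 1)) : Submodule K2 V7)
      · exact Or.inl ⟨h, hle⟩
      · exact Or.inr ⟨h, hle⟩
  have heq2 : Pairs.card = 42 * Da.card + 6 * Db.card := by
    rw [hcard2, ← hunion, Finset.sum_union hdisj, hsa, hsb]
  have h0mem : (0 : V7) ∈ Finset.univ.filter (fun x : V7 => x ∈ F) :=
    Finset.mem_filter.2 ⟨Finset.mem_univ _, Submodule.zero_mem _⟩
  have hPcard : Pairs.card =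
      ((Finset.univ.filter (fun x : V7 => x ∈ F)).card - 1)
        * ((Finset.univ.filter (fun x : V7 => x ∈ F)).card - 1)
        - ((Finset.univ.filter (fun x : V7 => x ∈ F)).card - 1) := by
    rw [hPairs, Finset.offDiag_card, Finset.card_erase_of_mem h0mem]
  have hffin : finrank K2 (LinearMap.ker (Matrix.vecMulLinear (M + 1))) = 5 ∨
      finrank K2 (LinearMap.ker (Matrix.vecMulLinear (M + 1))) = 6 := by omega
  have hcF := card_filter_mem (LinearMap.ker (Matrix.vecMulLinear (M + 1)))
  have h32 : (2:ℕ) ^ 5 = 32 := by norm_num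
  have h64 : (2:ℕ) ^ 6 = 64 := by norm_num
  rcases hffin with hf | hf
  · rw [hf, h32] at hcF
    rw [hcF] at hPcard hOutCard
    omega
  · rw [hf, h64] at hcF
    rw [hcF] at hPcard hOutCard
    omega

lemma finrank_ker_eq_four (hD : IsSteinerTriple 7 D) (hAut : subApply 7 M '' D = D)
    (hM2 : M * M = 1) (hM1 : M ≠ 1) :
    finrank K2 (LinearMap.ker (Matrix.vecMulLinear (M + 1))) = 4 := by
  have hrange_le : LinearMap.range nn ≤ LinearMap.ker nn := by
    rintro y ⟨x, rfl⟩
    exact LinearMap.mem_ker.2 (nsq hM2 x)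
  have hfr := LinearMap.finrank_range_add_finrank_ker (Matrix.vecMulLinear (M + 1))
  have hV7 : finrank K2 V7 = 7 := finrank_fin_fun K2
  rw [hV7] at hfr
  have hmono := Submodule.finrank_mono hrange_le
  have hne7 : finrank K2 (LinearMap.ker (Matrix.vecMulLinear (M + 1))) ≠ 7 := by
    intro h7
    have htop : (LinearMap.ker (Matrix.vecMulLinear (M + 1)) : Submodule K2 V7) = ⊤ :=
      eq_top_of_finrank_eq (by rw [h7, hV7])
    apply hM1
    have hzero : ∀ x : V7, Matrix.vecMul x (M + 1) = 0 := by
      intro x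
      have hx : x ∈ LinearMap.ker (Matrix.vecMulLinear (M + 1)) := by
        rw [htop]; exact Submodule.mem_top
      simpa [Matrix.vecMulLinear_apply, Matrix.vecMul_add] using hx
    have hm0 : M + 1 = 0 := by
      ext i j
      have h := hzero (Pi.single i 1)
      rw [Matrix.single_one_vecMul] at h
      have := congrFun h j
      simpa using this
    have : M = (M + 1) + 1 := by
      rw [add_assoc, matrix_add_self (1 : Matrix (Fin 7) (Fin 7) K2), add_zero]
    rw [this, hm0, zero_add]
  by_contra hne
  exact not_f_ge_5 hD hAut hM2 (by omega) (by omega)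

end Counting

-- ===== Part 2 : conjugacy construction =====
section Conj
open Matrix
variable {M : Matrix (Fin 7) (Fin 7) (ZMod 2)}

local notation "K2" => ZMod 2
local notation "V7" => BinVec 7

lemma vself (a : BinVec 7) : a + a = 0 := (add_eq_zero_iff a a).2 rfl

lemma vhelper (a b : BinVec 7) : a + (a + b) = b := by
  rw [← add_assoc, vself, zero_add]

lemma rank_mulVecLin_three
    (h4 : finrank K2 (LinearMap.ker (Matrix.vecMulLinear (M + 1))) = 4) :
    finrank K2 (LinearMap.range ((M + 1).mulVecLin)) = 3 := by
  have hVT : Matrix.vecMulLinear (M + 1) = ((M + 1)ᵀ).mulVecLin := by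
    apply LinearMap.ext
    intro x
    rw [Matrix.vecMulLinear_apply, Matrix.mulVecLin_apply, Matrix.mulVec_transpose]
  have hfr := LinearMap.finrank_range_add_finrank_ker (Matrix.vecMulLinear (M + 1))
  rw [finrank_fin_fun, h4] at hfr
  have hrT : ((M + 1)ᵀ).rank = 3 := by
    rw [Matrix.rank, ← hVT]
    omega
  have := Matrix.rank_transpose (M + 1)
  rw [hrT] at this
  rw [← Matrix.rank]
  exact this.symm

set_option maxHeartbeats 1000000 in
lemma conj_A73 (hM2 : M * M = 1)
    (h4 : finrank K2 (LinearMap.ker (Matrix.vecMulLinear (M + 1))) = 4) :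
    ConjGL 7 M (Avs 7 3) := by
  classical
  have hR3 := rank_mulVecLin_three h4
  set n2 := (M + 1).mulVecLin with hn2def
  have hn2 : ∀ x : V7, n2 x = M *ᵥ x + x := by
    intro x
    rw [hn2def, Matrix.mulVecLin_apply, Matrix.add_mulVec, Matrix.one_mulVec]
  have hMx : ∀ x : V7, M *ᵥ x = n2 x + x := by
    intro x
    rw [hn2 x, add_assoc, vself, add_zero]
  have hsq : ∀ x : V7, n2 (n2 x) = 0 := by
    intro x
    rw [hn2def]
    simp only [Matrix.mulVecLin_apply, Matrix.mulVec_mulVec, sq_zero hM2,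
      Matrix.zero_mulVec]
  have hRle : LinearMap.range n2 ≤ LinearMap.ker n2 := by
    rintro y ⟨x, rfl⟩
    exact LinearMap.mem_ker.2 (hsq x)
  have hker4 : finrank K2 (LinearMap.ker n2) = 4 := by
    have hfr := LinearMap.finrank_range_add_finrank_ker n2
    rw [finrank_fin_fun, hR3] at hfr
    omega
  set R := LinearMap.range n2 with hRdef
  obtain ⟨zb⟩ : Nonempty (Basis (Fin 3) K2 R) := ⟨Module.finBasisOfFinrankEq K2 R hR3⟩
  set z : Fin 3 → V7 := fun i => (zb i : V7) with hzdef
  have hzmem : ∀ i, z i ∈ R := fun i => (zb i).2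
  have hzker : ∀ i, n2 (z i) = 0 := fun i => hRle (hzmem i)
  have hu : ∀ i : Fin 3, ∃ u : V7, n2 u = z i := fun i => (zb i).2
  choose u hnu using hu
  have hlt : R < LinearMap.ker n2 := lt_of_le_of_ne hRle (by
    intro h
    rw [h, hker4] at hR3
    omega)
  obtain ⟨w, hwker, hwR⟩ := SetLike.exists_of_lt hlt
  have hnw : n2 w = 0 := hwker
  have hzli : LinearIndependent K2 z := by
    have h1 := zb.linearIndependent
    exact h1.map' R.subtype (LinearMap.ker_eq_bot.2 Subtype.val_injective)
  -- linear independence of the adapted family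
  have hli : LinearIndependent K2 (![u 0, u 0 + z 0, u 1, u 1 + z 1, u 2, u 2 + z 2, w]) := by
    rw [Fintype.linearIndependent_iff]
    intro c hc
    rw [Fin.sum_univ_seven] at hc
    have e0 : (![u 0, u 0 + z 0, u 1, u 1 + z 1, u 2, u 2 + z 2, w]) 0 = u 0 := rfl
    have e1 : (![u 0, u 0 + z 0, u 1, u 1 + z 1, u 2, u 2 + z 2, w]) 1 = u 0 + z 0 := rfl
    have e2 : (![u 0, u 0 + z 0, u 1, u 1 + z 1, u 2, u 2 + z 2, w]) 2 = u 1 := rfl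
    have e3 : (![u 0, u 0 + z 0, u 1, u 1 + z 1, u 2, u 2 + z 2, w]) 3 = u 1 + z 1 := rfl
    have e4 : (![u 0, u 0 + z 0, u 1, u 1 + z 1, u 2, u 2 + z 2, w]) 4 = u 2 := rfl
    have e5 : (![u 0, u 0 + z 0, u 1, u 1 + z 1, u 2, u 2 + z 2, w]) 5 = u 2 + z 2 := rfl
    have e6 : (![u 0, u 0 + z 0, u 1, u 1 + z 1, u 2, u 2 + z 2, w]) 6 = w := rfl
    rw [e0, e1, e2, e3, e4, e5, e6] at hc
    have happ := congrArg n2 hc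
    simp only [map_add, _root_.map_smul, hnu, hzker, hnw, smul_zero, add_zero,
      map_zero] at happ
    have hz3 := Fintype.linearIndependent_iff.1 hzli
    have hsums := hz3 ![c 0 + c 1, c 2 + c 3, c 4 + c 5] (by
      rw [Fin.sum_univ_three]
      show (c 0 + c 1) • z 0 + (c 2 + c 3) • z 1 + (c 4 + c 5) • z 2 = 0
      linear_combination (norm := module) happ)
    have hs1 : c 0 + c 1 = 0 := hsums 0
    have hs2 : c 2 + c 3 = 0 := hsums 1
    have hs3 : c 4 + c 5 = 0 := hsums 2
    have hc2 : c 1 • z 0 + c 3 • z 1 + c 5 • z 2 + c 6 • w = 0 := by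
      linear_combination (norm := module) hc - hs1 • u 0 - hs2 • u 1 - hs3 • u 2
    have hc6 : c 6 = 0 := by
      by_contra hne
      have hc61 : c 6 = 1 := by
        have h2 : ∀ a : ZMod 2, a = 0 ∨ a = 1 := by decide
        rcases h2 (c 6) with h | h
        · exact absurd h hne
        · exact h
      rw [hc61, one_smul] at hc2
      have hw : w = -(c 1 • z 0 + c 3 • z 1 + c 5 • z 2) := by
        linear_combination (norm := module) hc2
      have hwmem : w ∈ R := by
        rw [hw]
        exact R.neg_mem (R.add_mem (R.add_mem (R.smul_mem _ (hzmem 0))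
          (R.smul_mem _ (hzmem 1))) (R.smul_mem _ (hzmem 2)))
      exact hwR hwmem
    rw [hc6, zero_smul, add_zero] at hc2
    have hz135 := hz3 ![c 1, c 3, c 5] (by
      rw [Fin.sum_univ_three]
      show c 1 • z 0 + c 3 • z 1 + c 5 • z 2 = 0
      exact hc2)
    have hc1 : c 1 = 0 := hz135 0
    have hc3 : c 3 = 0 := hz135 1
    have hc5 : c 5 = 0 := hz135 2
    have hc0 : c 0 = 0 := by rw [hc1, add_zero] at hs1; exact hs1
    have hcc2 : c 2 = 0 := by rw [hc3, add_zero] at hs2; exact hs2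
    have hc4 : c 4 = 0 := by rw [hc5, add_zero] at hs3; exact hs3
    intro i
    fin_cases i <;> assumption
  -- the mulVec action on the family
  have hMu : ∀ i, M *ᵥ u i = u i + z i := by
    intro i
    rw [hMx, hnu, add_comm]
  have hMy : ∀ i, M *ᵥ (u i + z i) = u i := by
    intro i
    rw [hMx, map_add, hnu, hzker, add_zero, add_comm (u i) (z i), vhelper]
  have hMw : M *ᵥ w = w := by
    rw [hMx, hnw, zero_add]
  -- build the change of basis matrix
  set b : Fin 7 → V7 := ![u 0, u 0 + z 0, u 1, u 1 + z 1, u 2, u 2 + z 2, w] with hbdef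
  have hcard : Fintype.card (Fin 7) = finrank K2 V7 := by
    rw [finrank_fin_fun]
    simp
  let bb := basisOfLinearIndependentOfCardEqFinrank hli hcard
  have hbb : ⇑bb = b := coe_basisOfLinearIndependentOfCardEqFinrank hli hcard
  set P := (Pi.basisFun K2 (Fin 7)).toMatrix b with hPdef
  have hinv : Invertible P := by
    have h := (Pi.basisFun K2 (Fin 7)).invertibleToMatrix bb
    rwa [hbb] at h
  have hPij : ∀ i j, P i j = b j i := by
    intro i j
    rw [hPdef, Basis.toMatrix_apply, Pi.basisFun_repr]
  have hb0 : b 0 = u 0 := rfl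
  have hb1 : b 1 = u 0 + z 0 := rfl
  have hb2 : b 2 = u 1 := rfl
  have hb3 : b 3 = u 1 + z 1 := rfl
  have hb4 : b 4 = u 2 := rfl
  have hb5 : b 5 = u 2 + z 2 := rfl
  have hb6 : b 6 = w := rfl
  have key : M * P = P * Avs 7 3 := by
    ext i j
    rw [Matrix.mul_apply, Matrix.mul_apply]
    have hL : ∑ k, M i k * P k j = (M *ᵥ (b j)) i := by
      simp [Matrix.mulVec, dotProduct, hPij]
    rw [hL]
    have hv3 : ((3 : Fin 7) : ℕ) = 3 := rfl
    have hv4 : ((4 : Fin 7) : ℕ) = 4 := rfl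
    have hv5 : ((5 : Fin 7) : ℕ) = 5 := rfl
    have hv6 : ((6 : Fin 7) : ℕ) = 6 := rfl
    fin_cases j <;>
      simp [Fin.sum_univ_seven, hPij, Avs, pairSwap, hb0, hb1, hb2, hb3, hb4, hb5, hb6,
        hMu, hMy, hMw, hv3, hv4, hv5, hv6]
  exact ⟨@unitOfInvertible _ _ P hinv, by
    calc M = M * P * ⅟P := by rw [Matrix.mul_assoc, mul_invOf_self, Matrix.mul_one]
      _ = P * Avs 7 3 * ⅟P := by rw [key]⟩

end Conj


end Stmt8B

/-- an automorphism of order 2 of a binary q-analog of the Fano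
plane is conjugate to `A_{7,3}`. -/
theorem stmt8 (D : Set (Submodule (ZMod 2) (BinVec 7))) (hD : IsSteinerTriple 7 D)
    (A : GL (Fin 7) (ZMod 2)) (hAut : IsAutM 7 A.val D)
    (hA2 : A ^ 2 = 1) (hA1 : A ≠ 1) :
    ConjGL 7 A.val (Avs 7 3) := by
  have hM2 : A.val * A.val = 1 := by
    rw [pow_two] at hA2
    have h := congrArg Units.val hA2
    rwa [Units.val_mul, Units.val_one] at h
  have hM1 : A.val ≠ 1 := fun h => hA1 (Units.ext h)
  have hAut' : subApply 7 A.val '' D = D := hAut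
  have h4 := Stmt8B.finrank_ker_eq_four hD hAut' hM2 hM1
  exact Stmt8B.conj_A73 hM2 h4
end

section
/- Let D be a binary q-analog of the Fano plane. Then there is no A in GL(7, F_2) of order 31 that is an automorphism of D. Equivalently, 31 does not divide the order of Aut(D). -/
set_option synthInstance.maxHeartbeats 1000000
set_option maxHeartbeats 1000000

namespace Fano31

open Matrix

attribute [-instance] Matrix.instModuleForall

/-- Left action of `GL(7, F_2)` on row vectors by `g • x = x · g⁻¹`. -/
instance : MulAction (GL (Fin 7) (ZMod 2)) (BinVec 7) where
  smul g x := x ᵥ* (g⁻¹ : GL (Fin 7) (ZMod 2)).val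
  one_smul x := by
    show x ᵥ* ((1 : GL (Fin 7) (ZMod 2))⁻¹).val = x
    rw [inv_one, Units.val_one, Matrix.vecMul_one]
  mul_smul g h x := by
    show x ᵥ* ((g * h)⁻¹).val = (x ᵥ* (h⁻¹).val) ᵥ* (g⁻¹).val
    rw [Matrix.vecMul_vecMul, _root_.mul_inv_rev, Units.val_mul]

lemma smul_def (g : GL (Fin 7) (ZMod 2)) (x : BinVec 7) :
    g • x = x ᵥ* (g⁻¹ : GL (Fin 7) (ZMod 2)).val := rfl

lemma vecMul_pow_fixed (M : Matrix (Fin 7) (Fin 7) (ZMod 2)) (x : BinVec 7)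
    (hx : x ᵥ* M = x) : ∀ n : ℕ, x ᵥ* M ^ n = x
  | 0 => by rw [pow_zero, Matrix.vecMul_one]
  | n + 1 => by
      rw [pow_succ', ← Matrix.vecMul_vecMul, hx, vecMul_pow_fixed M x hx n]

/-- A permutation of a set of 8 elements whose 31st power is the identity
is the identity. -/
lemma perm_eq_one {α : Type*} [Fintype α] [DecidableEq α] (σ : Equiv.Perm α)
    (hcard : Fintype.card α = 8) (hσ : σ ^ 31 = 1) : σ = 1 := by
  have h1 : orderOf σ ∣ 31 := orderOf_dvd_of_pow_eq_one hσ
  have h2 : orderOf σ ∣ 40320 := by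
    have := orderOf_dvd_card (x := σ)
    rwa [Fintype.card_perm, hcard, show Nat.factorial 8 = 40320 from rfl] at this
  rcases (Nat.Prime.eq_one_or_self_of_dvd (by norm_num : Nat.Prime 31)
      _ h1) with h | h
  · exact orderOf_eq_one_iff.mp h
  · rw [h] at h2
    exact absurd h2 (by norm_num)

lemma noAut31 (D : Set (Submodule (ZMod 2) (BinVec 7))) (hD : IsSteinerTriple 7 D) :
    ¬ ∃ A : GL (Fin 7) (ZMod 2), orderOf A = 31 ∧ IsAutM 7 A.val D := by
  classical
  rintro ⟨A, hord, hAut⟩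
  haveI : Fact (Nat.Prime 31) := ⟨by norm_num⟩
  have hA31 : A ^ 31 = 1 := by rw [← hord]; exact pow_orderOf_eq_one A
  have hMval31 : A.val ^ 31 = 1 := by
    rw [← Units.val_pow_eq_pow_val, hA31, Units.val_one]
  -- the fixed space F
  set F : Submodule (ZMod 2) (BinVec 7) :=
    LinearMap.ker (Matrix.vecMulLinear A.val - LinearMap.id) with hFdef
  have mem_F : ∀ x : BinVec 7, x ∈ F ↔ x ᵥ* A.val = x := by
    intro x
    rw [hFdef, LinearMap.mem_ker, LinearMap.sub_apply, LinearMap.id_apply,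
      Matrix.vecMulLinear_apply, sub_eq_zero]
  -- counting fixed points of the cyclic group of order 31
  have hP : IsPGroup 31 ↥(Subgroup.zpowers A) :=
    IsPGroup.of_card (n := 1) (by rw [Nat.card_zpowers, hord, pow_one])
  have hfin : IsOfFinOrder A :=
    isOfFinOrder_iff_pow_eq_one.mpr ⟨31, by norm_num, hA31⟩
  have hfixset : MulAction.fixedPoints ↥(Subgroup.zpowers A) (BinVec 7)
      = (F : Set (BinVec 7)) := by
    ext x
    rw [MulAction.mem_fixedPoints, SetLike.mem_coe, mem_F]
    constructor
    · intro h
      have h2 : x ᵥ* (((A : GL (Fin 7) (ZMod 2))⁻¹)⁻¹).val = x :=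
        h ((⟨A, Subgroup.mem_zpowers A⟩ : ↥(Subgroup.zpowers A))⁻¹)
      rwa [inv_inv] at h2
    · intro hx g
      show x ᵥ* ((g : GL (Fin 7) (ZMod 2))⁻¹).val = x
      have hmem : ((g : GL (Fin 7) (ZMod 2))⁻¹) ∈ Subgroup.zpowers A := by
        have : (g : GL (Fin 7) (ZMod 2)) ∈ Subgroup.zpowers A := g.2
        exact (Subgroup.zpowers A).inv_mem this
      obtain ⟨n, hn⟩ := (hfin.mem_powers_iff_mem_zpowers).mpr hmem
      rw [← hn, Units.val_pow_eq_pow_val]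
      exact vecMul_pow_fixed A.val x hx n
  haveI : Fintype ↥F := Fintype.ofFinite _
  have hcardV : Nat.card (BinVec 7) = 128 := by
    rw [Nat.card_eq_fintype_card]
    simp [ZMod.card]
  have hcardF : Nat.card ↥F = 2 ^ Module.finrank (ZMod 2) ↥F := by
    rw [Nat.card_eq_fintype_card, Module.card_eq_pow_finrank (K := ZMod 2), ZMod.card]
  have hmod : (128 : ℕ) ≡ 2 ^ Module.finrank (ZMod 2) ↥F [MOD 31] := by
    have := hP.card_modEq_card_fixedPoints (BinVec 7)
    rwa [hcardV, show Nat.card (MulAction.fixedPoints ↥(Subgroup.zpowers A)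
      (BinVec 7)) = Nat.card ↥F from by rw [hfixset]; rfl, hcardF] at this
  have hrank7 : Module.finrank (ZMod 2) (BinVec 7) = 7 := by
    simp [BinVec]
  have hdle : Module.finrank (ZMod 2) ↥F ≤ 7 :=
    le_trans (Submodule.finrank_le F) (le_of_eq hrank7)
  -- conclude finrank F = 2
  have haux : ∀ d : ℕ, d < 8 → 2 ^ d % 31 = 4 → d = 2 ∨ d = 7 := by decide
  have hpow4 : 2 ^ Module.finrank (ZMod 2) ↥F % 31 = 4 := hmod.symm
  have hd2 : Module.finrank (ZMod 2) ↥F = 2 := by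
    rcases haux _ (Nat.lt_succ_of_le hdle) hpow4 with h | hd7
    · exact h
    -- then F = ⊤ and A = 1, contradicting orderOf A = 31
    exfalso
    have hFtop : F = ⊤ := Submodule.eq_top_of_finrank_eq (by rw [hd7, hrank7])
    have hall : ∀ x : BinVec 7, x ᵥ* A.val = x := by
      intro x
      exact (mem_F x).mp (hFtop ▸ Submodule.mem_top)
    have hA1 : A.val = 1 := by
      ext i j
      have h := congrFun (hall (Pi.single i 1)) j
      rw [Matrix.single_one_vecMul, Matrix.row_apply] at h
      rw [h, Matrix.one_apply, Pi.single_apply]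
      exact if_congr eq_comm rfl rfl
    have : A = 1 := Units.ext hA1
    rw [this, orderOf_one] at hord
    norm_num at hord
  -- F is invariant
  have hFinv : subApply 7 A.val F = F := by
    apply le_antisymm
    · intro y hy
      obtain ⟨x, hx, rfl⟩ := Submodule.mem_map.mp hy
      rw [Matrix.vecMulLinear_apply, (mem_F x).mp hx]
      exact hx
    · intro x hx
      exact Submodule.mem_map.mpr ⟨x, hx, by
        rw [Matrix.vecMulLinear_apply]; exact (mem_F x).mp hx⟩
  -- the unique block containing F
  obtain ⟨B, ⟨hBD, hFB⟩, hBuniq⟩ := hD.2 F hd2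
  have hB'D : subApply 7 A.val B ∈ D := by
    rw [← hAut]; exact Set.mem_image_of_mem _ hBD
  have hFB' : F ≤ subApply 7 A.val B := by
    rw [← hFinv]; exact Submodule.map_mono hFB
  have hBfix : subApply 7 A.val B = B := hBuniq _ ⟨hB'D, hFB'⟩
  -- the permutation induced by A on B
  have hfwd : ∀ x ∈ B, x ᵥ* A.val ∈ B := by
    intro x hx
    have : Matrix.vecMulLinear A.val x ∈ subApply 7 A.val B :=
      Submodule.mem_map.mpr ⟨x, hx, rfl⟩
    rwa [hBfix, Matrix.vecMulLinear_apply] at this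
  have hmulinv : A.val * (A⁻¹).val = 1 := by
    rw [← Units.val_mul, mul_inv_cancel, Units.val_one]
  have hinvmul : (A⁻¹).val * A.val = 1 := by
    rw [← Units.val_mul, inv_mul_cancel, Units.val_one]
  have hbwd : ∀ x ∈ B, x ᵥ* (A⁻¹).val ∈ B := by
    intro x hx
    rw [← hBfix] at hx
    obtain ⟨y, hy, rfl⟩ := Submodule.mem_map.mp hx
    rw [Matrix.vecMulLinear_apply, Matrix.vecMul_vecMul, hmulinv,
      Matrix.vecMul_one]
    exact hy
  let σ : Equiv.Perm ↥B :=
    { toFun := fun x => ⟨x.1 ᵥ* A.val, hfwd x.1 x.2⟩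
      invFun := fun x => ⟨x.1 ᵥ* (A⁻¹).val, hbwd x.1 x.2⟩
      left_inv := fun x => Subtype.ext (by
        simp only [Matrix.vecMul_vecMul, hmulinv, Matrix.vecMul_one])
      right_inv := fun x => Subtype.ext (by
        simp only [Matrix.vecMul_vecMul, hinvmul, Matrix.vecMul_one]) }
  have hσpow : ∀ (n : ℕ) (x : ↥B), ((σ ^ n) x).1 = x.1 ᵥ* A.val ^ n := by
    intro n
    induction n with
    | zero => intro x; rw [pow_zero, pow_zero, Matrix.vecMul_one]; rfl
    | succ n ih =>
        intro x
        rw [pow_succ σ n, Equiv.Perm.mul_apply, ih, pow_succ',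
          ← Matrix.vecMul_vecMul]
        rfl
  have hσ31 : σ ^ 31 = 1 := by
    apply Equiv.ext
    intro x
    apply Subtype.ext
    rw [hσpow 31 x, hMval31, Matrix.vecMul_one]
    rfl
  haveI : Fintype ↥B := Fintype.ofFinite _
  have hcardB : Fintype.card ↥B = 8 := by
    rw [Module.card_eq_pow_finrank (K := ZMod 2), ZMod.card, hD.1 B hBD]
    norm_num
  have hσ1 : σ = 1 := perm_eq_one σ hcardB hσ31
  -- hence B ≤ F, contradiction on dimensions
  have hBF : B ≤ F := by
    intro x hx
    have h : σ ⟨x, hx⟩ = ⟨x, hx⟩ := by rw [hσ1]; rfl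
    exact (mem_F x).mpr (congrArg Subtype.val h)
  have h32 : (3 : ℕ) ≤ 2 := by
    have := Submodule.finrank_mono hBF
    rwa [hd2, show Module.finrank (ZMod 2) ↥B = 3 from hD.1 B hBD] at this
  norm_num at h32

end Fano31


/-- No automorphism of order 31; equivalently `31 ∤ #Aut(D)`. -/
theorem stmt_elt (D : Set (Submodule (ZMod 2) (BinVec 7))) (hD : IsSteinerTriple 7 D) :
    (¬ ∃ A : GL (Fin 7) (ZMod 2), orderOf A = 31 ∧ IsAutM 7 A.val D) ∧
    ¬ (31 ∣ Nat.card (Aut 7 D)) := by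
  
  classical
  constructor
  · exact Fano31.noAut31 D hD
  · intro hdvd
    haveI : Fact (Nat.Prime 31) := ⟨by norm_num⟩
    haveI : Fintype ↥(Aut 7 D) := Fintype.ofFinite _
    rw [Nat.card_eq_fintype_card] at hdvd
    obtain ⟨x, hx⟩ := exists_prime_orderOf_dvd_card 31 hdvd
    exact Fano31.noAut31 D hD ⟨x.1, by rw [Subgroup.orderOf_coe]; exact hx, x.2⟩
end
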